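/- arXiv:1201.5010 — 5 statements merged into one kernel-verified Lean document; each statement's English description precedes it below -/
import Mathlib

section
/- Let G be a finite simple connected graph with d vertices and m edges in which every vertex has degree at most 3 and at least one vertex has degree less than 3. Assume that the graph distance between any two vertices of degree 3 is at least 3 and that G contains no 3-cycles. If d ≥ 2, then d ≥ 2g + 2, where g = m − d + 1. -/
/-- Let `G` be a finite simple connected graph with `d` vertices and `m`
edges in which every vertex has degree at most 3 and at least one vertex has degree less
than 3 (i.e. `G` is strictly subtrivalent).  Assume that the graph distance between any two
distinct vertices of degree 3 is at least 3 and that `G` contains no 3-cycles.  If `d ≥ 2`,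
then `d ≥ 2g + 2`, where `g = m − d + 1` is the genus (cycle rank) of `G`. -/
theorem graphCurve_degree_ge_two_genus_add_two
    {V : Type} [Fintype V] [DecidableEq V] (G : SimpleGraph V) [DecidableRel G.Adj]
    (hconn : G.Connected)
    (hdeg : ∀ v : V, G.degree v ≤ 3)
    (hsub : ∃ v : V, G.degree v < 3)
    (hdist : ∀ u v : V, G.degree u = 3 → G.degree v = 3 → u ≠ v → 3 ≤ G.dist u v)
    (htri : G.CliqueFree 3)
    (d m g : ℕ)
    (hd : Fintype.card V = d)
    (hm : G.edgeFinset.card = m)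
    (hg : m + 1 = d + g)
    (hd2 : 2 ≤ d) :
    2 * g + 2 ≤ d := by
  classical
  set T : Finset V := Finset.univ.filter (fun v => G.degree v = 3) with hT
  set t := T.card with ht
  -- degree sum bound: 2m ≤ 2d + t
  have h1 : ∑ v, G.degree v = 2 * m := by
    rw [SimpleGraph.sum_degrees_eq_twice_card_edges, hm]
  have h2 : (2 : ℕ) * m ≤ 2 * d + t := by
    have hb : ∑ v, G.degree v ≤ ∑ v : V, (2 + if G.degree v = 3 then 1 else 0) := by
      apply Finset.sum_le_sum
      intro v _
      by_cases h : G.degree v = 3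
      · simp [h]
      · have := hdeg v
        simp only [h, if_false]
        omega
    have hc : ∑ v : V, (2 + if G.degree v = 3 then 1 else 0) = 2 * d + t := by
      rw [Finset.sum_add_distrib, Finset.sum_const, Finset.card_univ, hd, ht, hT,
        Finset.card_filter, smul_eq_mul, Nat.mul_comm]
    omega
  -- if there is a degree-3 vertex, d ≥ 4
  have hclosed : ∀ v : V, G.degree v = 3 → (insert v (G.neighborFinset v)).card = 4 := by
    intro v hv
    rw [Finset.card_insert_of_notMem (G.notMem_neighborFinset_self v),
      SimpleGraph.card_neighborFinset_eq_degree, hv]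
  have hd4 : 1 ≤ t → 4 ≤ d := by
    intro htt
    obtain ⟨v, hv⟩ := Finset.card_pos.mp htt
    rw [hT, Finset.mem_filter] at hv
    calc 4 = (insert v (G.neighborFinset v)).card := (hclosed v hv.2).symm
    _ ≤ Fintype.card V := Finset.card_le_univ _
    _ = d := hd
  -- if t ≥ 2, d ≥ 4t via disjoint closed neighborhoods
  have h4t : 4 * t ≤ d := by
    have hdisj : ∀ u ∈ T, ∀ v ∈ T, u ≠ v →
        Disjoint (insert u (G.neighborFinset u)) (insert v (G.neighborFinset v)) := by
      intro u hu v hv huv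
      rw [hT, Finset.mem_filter] at hu hv
      rw [Finset.disjoint_left]
      intro w hwu hwv
      have duw : G.dist u w ≤ 1 := by
        rcases Finset.mem_insert.mp hwu with h | h
        · rw [h, SimpleGraph.dist_self]; omega
        · exact le_of_eq ((SimpleGraph.dist_eq_one_iff_adj).mpr
            ((SimpleGraph.mem_neighborFinset G u w).mp h))
      have dwv : G.dist w v ≤ 1 := by
        rcases Finset.mem_insert.mp hwv with h | h
        · rw [h, SimpleGraph.dist_self]; omega
        · rw [SimpleGraph.dist_comm]
          exact le_of_eq ((SimpleGraph.dist_eq_one_iff_adj).mpr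
            ((SimpleGraph.mem_neighborFinset G v w).mp h))
      have htr : G.dist u v ≤ G.dist u w + G.dist w v := hconn.dist_triangle
      have := hdist u v hu.2 hv.2 huv
      omega
    have hcard : (T.biUnion (fun v => insert v (G.neighborFinset v))).card = 4 * t := by
      rw [Finset.card_biUnion hdisj]
      rw [show (4 * t = ∑ _v ∈ T, 4) by rw [Finset.sum_const]; ring]
      apply Finset.sum_congr rfl
      intro v hv
      rw [hT, Finset.mem_filter] at hv
      exact hclosed v hv.2
    calc 4 * t = _ := hcard.symm
    _ ≤ Fintype.card V := Finset.card_le_univ _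
    _ = d := hd
  -- main case split
  rcases Nat.lt_or_ge t 2 with htlt | htge
  · -- t ≤ 1, so 2g ≤ t + 2 ≤ 3, so g ≤ 1
    have hgle : g ≤ 1 := by omega
    rcases Nat.eq_or_lt_of_le hgle with hg1 | hg0
    · -- g = 1 : need d ≥ 4
      rcases Nat.eq_zero_or_pos t with ht0 | htpos
      · -- t = 0 : all degrees ≤ 2, in fact all = 2
        have hdeg2 : ∀ v : V, G.degree v ≤ 2 := by
          intro v
          have hv3 : G.degree v ≠ 3 := by
            intro h
            have : v ∈ T := by rw [hT, Finset.mem_filter]; exact ⟨Finset.mem_univ v, h⟩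
            have hp : 0 < T.card := Finset.card_pos.mpr ⟨v, this⟩
            omega
          have := hdeg v
          omega
        have hmd : m = d := by omega
        have hall : ∀ v : V, G.degree v = 2 := by
          by_contra hc
          push_neg at hc
          obtain ⟨v, hv⟩ := hc
          have hlt : ∑ w, G.degree w < ∑ _w : V, 2 := by
            apply Finset.sum_lt_sum (fun i _ => hdeg2 i)
            exact ⟨v, Finset.mem_univ v, lt_of_le_of_ne (hdeg2 v) hv⟩
          rw [h1, Finset.sum_const, Finset.card_univ, hd, smul_eq_mul] at hlt
          omega
        -- d = 2 impossible
        have hne2 : d ≠ 2 := by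
          intro hdd
          obtain ⟨v, _⟩ := hsub
          have := SimpleGraph.degree_lt_card_verts (G := G) v
          rw [hd, hdd, hall v] at this
          omega
        -- d = 3 gives a triangle
        have hne3 : d ≠ 3 := by
          intro hdd
          have hadj : ∀ x y : V, x ≠ y → G.Adj x y := by
            intro x y hxy
            have hnb : G.neighborFinset x = Finset.univ.erase x := by
              apply Finset.eq_of_subset_of_card_le
              · intro z hz
                rw [SimpleGraph.mem_neighborFinset] at hz
                exact Finset.mem_erase.mpr ⟨hz.ne', Finset.mem_univ z⟩
              · rw [Finset.card_erase_of_mem (Finset.mem_univ x), Finset.card_univ, hd, hdd,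
                  SimpleGraph.card_neighborFinset_eq_degree, hall x]
            have : y ∈ G.neighborFinset x := by
              rw [hnb]
              exact Finset.mem_erase.mpr ⟨hxy.symm, Finset.mem_univ y⟩
            exact (SimpleGraph.mem_neighborFinset G x y).mp this
          exact htri Finset.univ
            ⟨fun x _ y _ hxy => hadj x y hxy, by rw [Finset.card_univ, hd, hdd]⟩
        omega
      · -- t ≥ 1 : d ≥ 4
        have := hd4 htpos
        omega
    · -- g = 0
      omega
  · -- t ≥ 2 : 2g + 2 ≤ t + 4 ≤ 4t ≤ d
    omega
end

section
/- Let G be a finite simple connected graph with d ≥ 2 vertices and m edges in which every vertex has degree at most 3 and some vertex has degree less than 3, the graph distance between any two vertices of degree 3 is at least 3, and G contains no 3-cycles; set g = m − d + 1. Then there exists a family (W_v)_{v ∈ V(G)} of 2-dimensional linear subspaces of k^{d−g+1}, indexed by the vertices of G, such that: (i) the subspaces W_v are pairwise distinct and together span k^{d−g+1}; (ii) for distinct vertices u and v, W_u ∩ W_v is nonzero if and only if u and v are adjacent in G, and in that case W_u ∩ W_v is 1-dimensional; and (iii) for every vertex v, the vanishing ideal of W_v in k[x_0, …, x_{d−g}]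 is generated by a set of linear polynomials, each of which is either a single variable x_i or a binomial x_j − x_k. -/
set_option linter.unusedSectionVars false

open MvPolynomial Finset

def vanishingIdeal (k : Type*) [CommRing k] (N : ℕ) (Z : Set (Fin N → k)) :
    Ideal (MvPolynomial (Fin N) k) where
  carrier := {p | ∀ x ∈ Z, MvPolynomial.eval x p = 0}
  zero_mem' := fun x _ => map_zero _
  add_mem' := fun {a b} ha hb x hx => by rw [map_add, ha x hx, hb x hx, add_zero]
  smul_mem' := fun c p hp x hx => by rw [smul_eq_mul, map_mul, hp x hx, mul_zero]

lemma mem_vanishingIdeal_iff {k : Type*} [CommRing k] {N : ℕ} {Z : Set (Fin N → k)}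
    {p : MvPolynomial (Fin N) k} :
    p ∈ vanishingIdeal k N Z ↔ ∀ x ∈ Z, MvPolynomial.eval x p = 0 := Iff.rfl

section Generic
variable {k : Type} [Field k] {N : ℕ}

/-- indicator vector of a finset of coordinates -/
def ind (k : Type) [Field k] {N : ℕ} (A : Finset (Fin N)) : Fin N → k :=
  fun i => if i ∈ A then 1 else 0

lemma ind_apply (A : Finset (Fin N)) (i : Fin N) :
    ind k A i = if i ∈ A then 1 else 0 := rfl

lemma comb_apply (A B : Finset (Fin N)) (a b : k) (i : Fin N) :
    (a • ind k A + b • ind k B) i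
      = (if i ∈ A then a else 0) + (if i ∈ B then b else 0) := by
  simp [ind_apply, mul_ite]

lemma mem_pairSpan_iff {A B : Finset (Fin N)} {x : Fin N → k} :
    x ∈ Submodule.span k {ind k A, ind k B} ↔
      ∃ a b : k, a • ind k A + b • ind k B = x :=
  Submodule.mem_span_pair

lemma indep_pair {A B : Finset (Fin N)} (hA : A.Nonempty) (hB : B.Nonempty)
    (hAB : Disjoint A B) :
    LinearIndependent k ![ind k A, ind k B] := by
  rw [LinearIndependent.pair_iff]
  intro s t hst
  obtain ⟨a, ha⟩ := hA
  obtain ⟨b, hb⟩ := hB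
  constructor
  · have := congrFun hst a
    simpa [ind_apply, ha, Finset.disjoint_left.mp hAB ha] using this
  · have := congrFun hst b
    simpa [ind_apply, hb, Finset.disjoint_right.mp hAB hb] using this

lemma range_pair {M : Type*} (x y : M) : Set.range ![x, y] = {x, y} := by
  ext z
  constructor
  · rintro ⟨i, rfl⟩; fin_cases i <;> simp
  · rintro (rfl | rfl)
    exacts [⟨0, rfl⟩, ⟨1, rfl⟩]

lemma finrank_pairSpan {A B : Finset (Fin N)} (hA : A.Nonempty) (hB : B.Nonempty)
    (hAB : Disjoint A B) :
    Module.finrank k (Submodule.span k {ind k A, ind k B}) = 2 := by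
  have h := finrank_span_eq_card (R := k) (indep_pair hA hB hAB)
  rwa [range_pair, Fintype.card_fin] at h

lemma pairSpan_vanishingIdeal [CharZero k] {A B : Finset (Fin N)} (hA : A.Nonempty)
    (hB : B.Nonempty) (hAB : Disjoint A B) :
    ∃ S : Set (MvPolynomial (Fin N) k),
      (∀ p ∈ S, (∃ i, p = X i) ∨ ∃ j l, j ≠ l ∧ p = X j - X l) ∧
      Ideal.span S =
        vanishingIdeal k N (Submodule.span k {ind k A, ind k B} : Set (Fin N → k)) := by
  obtain ⟨a₀, ha₀⟩ := hA
  obtain ⟨b₀, hb₀⟩ := hB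
  set S : Set (MvPolynomial (Fin N) k) :=
    {p | (∃ i, i ∉ A ∧ i ∉ B ∧ p = X i) ∨ (∃ j ∈ A, j ≠ a₀ ∧ p = X j - X a₀) ∨
      (∃ j ∈ B, j ≠ b₀ ∧ p = X j - X b₀)} with hS
  refine ⟨S, ?_, ?_⟩
  · rintro p (⟨i, _, _, rfl⟩ | ⟨j, _, hj, rfl⟩ | ⟨j, _, hj, rfl⟩)
    · exact Or.inl ⟨i, rfl⟩
    · exact Or.inr ⟨j, a₀, hj, rfl⟩
    · exact Or.inr ⟨j, b₀, hj, rfl⟩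
  · apply le_antisymm
    · rw [Ideal.span_le]
      rintro p (⟨i, hiA, hiB, rfl⟩ | ⟨j, hjA, _, rfl⟩ | ⟨j, hjB, _, rfl⟩) <;>
        intro x hx <;> obtain ⟨a, b, rfl⟩ := mem_pairSpan_iff.mp hx
      · simp [ind_apply, hiA, hiB]
      · simp [ind_apply, hjA, ha₀, Finset.disjoint_left.mp hAB hjA,
          Finset.disjoint_left.mp hAB ha₀]
      · simp [ind_apply, hjB, hb₀, Finset.disjoint_right.mp hAB hjB,
          Finset.disjoint_right.mp hAB hb₀]
    · intro p hp
      set g : Fin N → MvPolynomial (Fin N) k :=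
        fun i => if i ∈ A then X a₀ else if i ∈ B then X b₀ else 0 with hg
      have hXg : ∀ i, X i - g i ∈ Ideal.span S := by
        intro i
        by_cases hiA : i ∈ A
        · by_cases hia : i = a₀
          · subst hia; simp [hg, hiA]
          · apply Ideal.subset_span
            exact Or.inr (Or.inl ⟨i, hiA, hia, by simp [hg, hiA]⟩)
        · by_cases hiB : i ∈ B
          · by_cases hib : i = b₀
            · subst hib; simp [hg, hiA, hiB]
            · apply Ideal.subset_span
              exact Or.inr (Or.inr ⟨i, hiB, hib, by simp [hg, hiA, hiB]⟩)
          · apply Ideal.subset_span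
            exact Or.inl ⟨i, hiA, hiB, by simp [hg, hiA, hiB]⟩
      have key : ∀ q : MvPolynomial (Fin N) k, q - bind₁ g q ∈ Ideal.span S := by
        intro q
        induction q using MvPolynomial.induction_on with
        | C a => simp
        | add p q hp hq =>
            have : p + q - bind₁ g (p + q) = (p - bind₁ g p) + (q - bind₁ g q) := by
              rw [map_add]; ring
            rw [this]; exact Ideal.add_mem _ hp hq
        | mul_X p i hp =>
            have : p * X i - bind₁ g (p * X i)
                = p * (X i - g i) + (p - bind₁ g p) * g i := by
              rw [map_mul, bind₁_X_right]; ring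
            rw [this]
            exact Ideal.add_mem _ (Ideal.mul_mem_left _ _ (hXg i))
              (Ideal.mul_mem_right _ _ hp)
      have hb0 : bind₁ g p = 0 := by
        apply MvPolynomial.funext
        intro x
        rw [map_zero]
        have : eval x (bind₁ g p)
            = eval (fun i => eval x (g i)) p := by
          rw [show (eval x : MvPolynomial (Fin N) k →+* k)
            = eval₂Hom (RingHom.id k) x from rfl, eval₂Hom_bind₁]
          rfl
        rw [this]
        apply hp
        refine mem_pairSpan_iff.mpr ⟨x a₀, x b₀, ?_⟩
        funext i
        by_cases hiA : i ∈ A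
        · simp [ind_apply, hg, hiA, Finset.disjoint_left.mp hAB hiA]
        · by_cases hiB : i ∈ B <;> simp [ind_apply, hg, hiA, hiB]
      have := key p
      rwa [hb0, sub_zero] at this

end Generic

section Graph
open SimpleGraph

variable {V : Type} [Fintype V] [DecidableEq V] [Nonempty V]

noncomputable instance : LinearOrder (Sym2 V) := IsWellOrder.linearOrder WellOrderingRel

variable (G : SimpleGraph V) [DecidableRel G.Adj]

/-- distinguished ("third") edge at a vertex: the minimal incident edge -/
noncomputable def tedge (v : V) : Sym2 V :=
  if h : (G.incidenceFinset v).Nonempty then (G.incidenceFinset v).min' h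
  else s(Classical.arbitrary V, Classical.arbitrary V)

def IsThird (e : Sym2 V) : Prop := ∃ v, G.degree v = 3 ∧ e = tedge G v

noncomputable instance : DecidablePred (IsThird G) := fun _ => Classical.propDecidable _

abbrev Idx : Type :=
  {e : Sym2 V // e ∈ G.edgeFinset ∧ ¬ IsThird G e} ⊕ {v : V // G.degree v = 1}

/-- bundle of hypotheses on the graph -/
structure Good : Prop where
  conn : G.Connected
  deg_le : ∀ v, G.degree v ≤ 3
  dist3 : ∀ u v : V, G.degree u = 3 → G.degree v = 3 → u ≠ v → 3 ≤ G.dist u v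
  tri : G.CliqueFree 3
  two : 2 ≤ Fintype.card V

variable {G}

lemma mem_inc {e : Sym2 V} {v : V} :
    e ∈ G.incidenceFinset v ↔ e ∈ G.edgeFinset ∧ v ∈ e := by
  rw [SimpleGraph.mem_incidenceFinset]
  simp [SimpleGraph.incidenceSet, SimpleGraph.mem_edgeFinset]

lemma edge_eq {e : Sym2 V} {u v : V} (hu : e ∈ G.incidenceFinset u)
    (hv : e ∈ G.incidenceFinset v) (huv : u ≠ v) : e = s(u, v) ∧ G.Adj u v := by
  rw [mem_inc] at hu hv
  have he : e = s(u, v) := (Sym2.mem_and_mem_iff huv).mp ⟨hu.2, hv.2⟩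
  refine ⟨he, ?_⟩
  have := hu.1
  rw [he, SimpleGraph.mem_edgeFinset, SimpleGraph.mem_edgeSet] at this
  exact this

lemma Good.deg_pos (hG : Good G) (v : V) : 0 < G.degree v := by
  obtain ⟨u, hu⟩ := Fintype.exists_ne_of_one_lt_card (by have := hG.two; omega : 1 < Fintype.card V) v
  obtain ⟨p⟩ := hG.conn.preconnected v u
  cases p with
  | nil => exact absurd rfl hu.symm
  | cons h _ => exact G.degree_pos_iff_exists_adj v |>.mpr ⟨_, h⟩

lemma inc_nonempty (hG : Good G) (v : V) : (G.incidenceFinset v).Nonempty := by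
  rw [← Finset.card_pos, G.card_incidenceFinset_eq_degree]
  exact hG.deg_pos v

lemma tedge_mem (hG : Good G) (v : V) : tedge G v ∈ G.incidenceFinset v := by
  rw [tedge, dif_pos (inc_nonempty hG v)]
  exact Finset.min'_mem _ _

lemma adj_dist_le {u v : V} (h : G.Adj u v) : G.dist u v ≤ 1 := by
  simpa using SimpleGraph.dist_le (SimpleGraph.Walk.cons h SimpleGraph.Walk.nil)

lemma Good.not_adj33 (hG : Good G) {u v : V} (h3u : G.degree u = 3)
    (h3v : G.degree v = 3) (h : G.Adj u v) : False := by
  have h1 := adj_dist_le h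
  have h2 := hG.dist3 u v h3u h3v h.ne
  omega

lemma Good.not_common33 (hG : Good G) {u w x : V} (h3u : G.degree u = 3)
    (h3w : G.degree w = 3) (huw : u ≠ w) (h1 : G.Adj u x) (h2 : G.Adj x w) : False := by
  have hle : G.dist u w ≤ 2 := by
    simpa using SimpleGraph.dist_le
      (SimpleGraph.Walk.cons h1 (SimpleGraph.Walk.cons h2 SimpleGraph.Walk.nil))
  have := hG.dist3 u w h3u h3w huw
  omega

lemma Good.no_triangle (hG : Good G) {u v w : V} (h1 : G.Adj u v) (h2 : G.Adj u w)
    (h3 : G.Adj v w) : False := by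
  exact hG.tri {u, v, w} (SimpleGraph.is3Clique_triple_iff.mpr ⟨h1, h2, h3⟩)

lemma tedge_inj (hG : Good G) {v w : V} (h3v : G.degree v = 3) (h3w : G.degree w = 3)
    (h : tedge G v = tedge G w) : v = w := by
  by_contra hne
  have hv := tedge_mem hG v
  have hw := h ▸ tedge_mem hG w
  exact hG.not_adj33 h3v h3w (edge_eq hv hw hne).2

noncomputable def owner (e : Sym2 V) : V :=
  if h : IsThird G e then h.choose else Classical.arbitrary V

lemma owner_spec {e : Sym2 V} (h : IsThird G e) :
    G.degree (owner (G := G) e) = 3 ∧ e = tedge G (owner (G := G) e) := by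
  rw [owner, dif_pos h]
  exact h.choose_spec

lemma owner_eq (hG : Good G) {e : Sym2 V} {v : V} (h3 : G.degree v = 3)
    (he : e = tedge G v) : owner (G := G) e = v := by
  have h : IsThird G e := ⟨v, h3, he⟩
  obtain ⟨h3o, heo⟩ := owner_spec h
  exact tedge_inj hG h3o h3 (by rw [← heo, he])

lemma third_mem_inc_owner (hG : Good G) {e : Sym2 V} (h : IsThird G e) :
    e ∈ G.incidenceFinset (owner (G := G) e) := by
  obtain ⟨_, heo⟩ := owner_spec h
  have := tedge_mem hG (owner (G := G) e)
  rwa [← heo] at this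

lemma third_unique (hG : Good G) {e f : Sym2 V} {v : V} (he : e ∈ G.incidenceFinset v)
    (hf : f ∈ G.incidenceFinset v) (hte : IsThird G e) (htf : IsThird G f) : e = f := by
  obtain ⟨h3e, hee⟩ := owner_spec hte
  obtain ⟨h3f, hff⟩ := owner_spec htf
  have hme : e ∈ G.incidenceFinset (owner (G := G) e) := third_mem_inc_owner hG hte
  have hmf : f ∈ G.incidenceFinset (owner (G := G) f) := third_mem_inc_owner hG htf
  by_cases hvw : v = owner (G := G) e
  · by_cases hvw' : v = owner (G := G) f
    · rw [hee, hff, ← hvw, ← hvw']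
    · exact (hG.not_adj33 (by rwa [← hvw] at h3e) h3f (edge_eq hf hmf hvw').2).elim
  · by_cases hvw' : v = owner (G := G) f
    · exact (hG.not_adj33 h3e (by rwa [← hvw'] at h3f) (edge_eq he hme hvw).2.symm).elim
    · by_cases hww : owner (G := G) e = owner (G := G) f
      · rw [hee, hff, hww]
      · exact (hG.not_common33 h3e h3f hww (edge_eq he hme hvw).2.symm
          (edge_eq hf hmf hvw').2).elim

lemma mem_eq_min'_or_max' {α : Type*} [LinearOrder α] {s : Finset α} (h : s.card ≤ 2) {e : α}
    (he : e ∈ s) : e = s.min' ⟨e, he⟩ ∨ e = s.max' ⟨e, he⟩ := by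
  by_contra hc
  push_neg at hc
  have h1 := Finset.min'_le s e he
  have h2 := Finset.le_max' s e he
  have hne1 : s.min' ⟨e, he⟩ ≠ e := fun h => hc.1 h.symm
  have hne2 : e ≠ s.max' ⟨e, he⟩ := hc.2
  have hne3 : s.min' ⟨e, he⟩ ≠ s.max' ⟨e, he⟩ :=
    ne_of_lt (lt_of_lt_of_le (lt_of_le_of_ne h1 hne1) h2)
  have hsub : ({s.min' ⟨e, he⟩, e, s.max' ⟨e, he⟩} : Finset α) ⊆ s := by
    intro x hx
    simp only [Finset.mem_insert, Finset.mem_singleton] at hx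
    rcases hx with rfl | rfl | rfl
    · exact Finset.min'_mem _ _
    · exact he
    · exact Finset.max'_mem _ _
  have hcard : ({s.min' ⟨e, he⟩, e, s.max' ⟨e, he⟩} : Finset α).card = 3 := by
    rw [Finset.card_insert_of_notMem (by simp [hne1, hne3]),
      Finset.card_insert_of_notMem (by simp [hne2]), Finset.card_singleton]
  have := Finset.card_le_card hsub
  omega

lemma inc_subset_edgeFinset {e : Sym2 V} {v : V} (h : e ∈ G.incidenceFinset v) :
    e ∈ G.edgeFinset := (mem_inc.mp h).1

variable {N : ℕ}

noncomputable def co (σ : Idx G ≃ Fin (N + 1)) (e : Sym2 V) : Fin (N + 1) :=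
  if h : e ∈ G.edgeFinset ∧ ¬ IsThird G e then σ (Sum.inl ⟨e, h⟩) else 0

noncomputable def ow (σ : Idx G ≃ Fin (N + 1)) (v : V) : Fin (N + 1) :=
  if h : G.degree v = 1 then σ (Sum.inr ⟨v, h⟩) else 0

noncomputable def eS (σ : Idx G ≃ Fin (N + 1)) (e : Sym2 V) : Finset (Fin (N + 1)) :=
  if IsThird G e then ((G.incidenceFinset (owner (G := G) e)).erase e).image (co σ)
  else if e ∈ G.edgeFinset then {co σ e} else ∅

noncomputable def base (G : SimpleGraph V) [DecidableRel G.Adj] (v : V) : Finset (Sym2 V) :=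
  if G.degree v = 3 then (G.incidenceFinset v).filter (fun e => ¬ IsThird G e)
  else G.incidenceFinset v

noncomputable def eA (G : SimpleGraph V) [DecidableRel G.Adj] (v : V) : Sym2 V :=
  if h : (base G v).Nonempty then (base G v).min' h
  else s(Classical.arbitrary V, Classical.arbitrary V)

noncomputable def eB (G : SimpleGraph V) [DecidableRel G.Adj] (v : V) : Sym2 V :=
  if h : (base G v).Nonempty then (base G v).max' h
  else s(Classical.arbitrary V, Classical.arbitrary V)

noncomputable def blkA (σ : Idx G ≃ Fin (N + 1)) (v : V) : Finset (Fin (N + 1)) :=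
  eS σ (eA G v)

noncomputable def blkB (σ : Idx G ≃ Fin (N + 1)) (v : V) : Finset (Fin (N + 1)) :=
  if G.degree v = 1 then {ow σ v} else eS σ (eB G v)

noncomputable def Wv (k : Type) [Field k] (σ : Idx G ≃ Fin (N + 1)) (v : V) :
    Submodule k (Fin (N + 1) → k) :=
  Submodule.span k {ind k (blkA σ v), ind k (blkB σ v)}

lemma co_inj {σ : Idx G ≃ Fin (N + 1)} {e f : Sym2 V}
    (he : e ∈ G.edgeFinset ∧ ¬ IsThird G e) (hf : f ∈ G.edgeFinset ∧ ¬ IsThird G f)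
    (h : co σ e = co σ f) : e = f := by
  rw [co, co, dif_pos he, dif_pos hf] at h
  simpa using σ.injective h

lemma co_ne_ow {σ : Idx G ≃ Fin (N + 1)} {e : Sym2 V} {v : V}
    (he : e ∈ G.edgeFinset ∧ ¬ IsThird G e) (hv : G.degree v = 1) :
    co σ e ≠ ow σ v := by
  rw [co, ow, dif_pos he, dif_pos hv]
  intro h
  exact absurd (σ.injective h) (by simp)

lemma base_subset {v : V} : base G v ⊆ G.incidenceFinset v := by
  rw [base]
  split
  · exact Finset.filter_subset _ _
  · exact Finset.Subset.refl _

lemma base_eq_of_ne3 {v : V} (h : G.degree v ≠ 3) : base G v = G.incidenceFinset v := by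
  rw [base, if_neg h]

lemma base_eq_erase (hG : Good G) {v : V} (h3 : G.degree v = 3) :
    base G v = (G.incidenceFinset v).erase (tedge G v) := by
  rw [base, if_pos h3]
  ext f
  simp only [Finset.mem_filter, Finset.mem_erase]
  constructor
  · rintro ⟨hf, hnf⟩
    exact ⟨fun h => hnf (h ▸ ⟨v, h3, rfl⟩), hf⟩
  · rintro ⟨hne, hf⟩
    refine ⟨hf, fun ht => hne ?_⟩
    exact third_unique hG hf (tedge_mem hG v) ht ⟨v, h3, rfl⟩

lemma card_base3 (hG : Good G) {v : V} (h3 : G.degree v = 3) : (base G v).card = 2 := by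
  rw [base_eq_erase hG h3, Finset.card_erase_of_mem (tedge_mem hG v),
    G.card_incidenceFinset_eq_degree, h3]

lemma card_base_le (hG : Good G) (v : V) : (base G v).card ≤ 2 := by
  by_cases h3 : G.degree v = 3
  · exact le_of_eq (card_base3 hG h3)
  · rw [base_eq_of_ne3 h3]
    rw [G.card_incidenceFinset_eq_degree]
    have := hG.deg_le v
    omega

lemma base_nonempty (hG : Good G) (v : V) : (base G v).Nonempty := by
  by_cases h3 : G.degree v = 3
  · rw [← Finset.card_pos, card_base3 hG h3]; omega
  · rw [base_eq_of_ne3 h3]; exact inc_nonempty hG v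

lemma eA_mem (hG : Good G) (v : V) : eA G v ∈ base G v := by
  rw [eA, dif_pos (base_nonempty hG v)]; exact Finset.min'_mem _ _

lemma eB_mem (hG : Good G) (v : V) : eB G v ∈ base G v := by
  rw [eB, dif_pos (base_nonempty hG v)]; exact Finset.max'_mem _ _

lemma mem_base_eq (hG : Good G) {v : V} {e : Sym2 V} (he : e ∈ base G v) :
    e = eA G v ∨ e = eB G v := by
  have h := mem_eq_min'_or_max' (card_base_le hG v) he
  rwa [eA, eB, dif_pos ⟨e, he⟩, dif_pos ⟨e, he⟩]

lemma eA_ne_eB (hG : Good G) {v : V} (h2 : 2 ≤ G.degree v) : eA G v ≠ eB G v := by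
  have hcard : 1 < (base G v).card := by
    by_cases h3 : G.degree v = 3
    · rw [card_base3 hG h3]; omega
    · rw [base_eq_of_ne3 h3, G.card_incidenceFinset_eq_degree]; omega
  rw [eA, eB, dif_pos (base_nonempty hG v), dif_pos (base_nonempty hG v)]
  exact @ne_of_lt (Sym2 V)
    (IsWellOrder.linearOrder WellOrderingRel : LinearOrder (Sym2 V)).toPartialOrder.toPreorder
    _ _ (Finset.min'_lt_max'_of_card _ hcard)

lemma eS_nonthird {σ : Idx G ≃ Fin (N + 1)} {e : Sym2 V} (he : e ∈ G.edgeFinset)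
    (hn : ¬ IsThird G e) : eS σ e = {co σ e} := by
  rw [eS, if_neg hn, if_pos he]

lemma eS_third {σ : Idx G ≃ Fin (N + 1)} {e : Sym2 V} (h : IsThird G e) :
    eS σ e = ((G.incidenceFinset (owner (G := G) e)).erase e).image (co σ) := by
  rw [eS, if_pos h]

lemma owner_erase_valid (hG : Good G) {e g : Sym2 V} (h : IsThird G e)
    (hg : g ∈ G.incidenceFinset (owner (G := G) e)) (hne : g ≠ e) :
    g ∈ G.edgeFinset ∧ ¬ IsThird G g := by
  refine ⟨inc_subset_edgeFinset hg, fun htg => hne ?_⟩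
  exact third_unique hG hg (third_mem_inc_owner hG h) htg h

lemma eS_shape (hG : Good G) {σ : Idx G ≃ Fin (N + 1)} {e : Sym2 V} {i : Fin (N + 1)}
    (hi : i ∈ eS σ e) :
    ∃ f, (f ∈ G.edgeFinset ∧ ¬ IsThird G f) ∧ i = co σ f ∧
      (f = e ∨ (IsThird G e ∧ f ∈ G.incidenceFinset (owner (G := G) e) ∧ f ≠ e)) := by
  rw [eS] at hi
  split at hi
  · rename_i ht
    rw [Finset.mem_image] at hi
    obtain ⟨g, hg, rfl⟩ := hi
    rw [Finset.mem_erase] at hg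
    exact ⟨g, owner_erase_valid hG ht hg.2 hg.1, rfl, Or.inr ⟨ht, hg.2, hg.1⟩⟩
  · rename_i ht
    split at hi
    · rename_i heE
      rw [Finset.mem_singleton] at hi
      exact ⟨e, ⟨heE, ht⟩, hi, Or.inl rfl⟩
    · simp at hi

lemma co_mem_eS (hG : Good G) {σ : Idx G ≃ Fin (N + 1)} {f e : Sym2 V}
    (hf : f ∈ G.edgeFinset ∧ ¬ IsThird G f) (h : co σ f ∈ eS σ e) :
    f = e ∨ (IsThird G e ∧ f ∈ G.incidenceFinset (owner (G := G) e) ∧ f ≠ e) := by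
  obtain ⟨g, hg, hco, hrel⟩ := eS_shape hG h
  have := co_inj hf hg hco
  subst this
  exact hrel

lemma ow_not_mem_eS (hG : Good G) {σ : Idx G ≃ Fin (N + 1)} {v : V} {e : Sym2 V}
    (hv : G.degree v = 1) : ow σ v ∉ eS σ e := by
  intro h
  obtain ⟨f, hf, hco, _⟩ := eS_shape hG h
  exact co_ne_ow hf hv hco.symm

lemma eS_nonempty (hG : Good G) {σ : Idx G ≃ Fin (N + 1)} {e : Sym2 V}
    (he : e ∈ G.edgeFinset) : (eS σ e).Nonempty := by
  by_cases ht : IsThird G e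
  · rw [eS_third ht]
    apply Finset.Nonempty.image
    rw [← Finset.card_pos, Finset.card_erase_of_mem (third_mem_inc_owner hG ht),
      G.card_incidenceFinset_eq_degree, (owner_spec ht).1]
    omega
  · rw [eS_nonthird he ht]
    exact ⟨_, Finset.mem_singleton_self _⟩

lemma edge_unique {e f : Sym2 V} {v w : V} (hev : e ∈ G.incidenceFinset v)
    (hfv : f ∈ G.incidenceFinset v) (hew : e ∈ G.incidenceFinset w)
    (hfw : f ∈ G.incidenceFinset w) (hvw : v ≠ w) : e = f := by
  rw [(edge_eq hev hew hvw).1, (edge_eq hfv hfw hvw).1]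

lemma blk_third_structure (hG : Good G) {e : Sym2 V} {v : V} (he : e ∈ base G v)
    (ht : IsThird G e) :
    G.degree v ≠ 3 ∧ owner (G := G) e ≠ v ∧ G.Adj v (owner (G := G) e) := by
  have h3 : G.degree v ≠ 3 := by
    intro h3
    rw [base, if_pos h3, Finset.mem_filter] at he
    exact he.2 ht
  have hne : owner (G := G) e ≠ v := fun h => h3 (h ▸ (owner_spec ht).1)
  exact ⟨h3, hne, (edge_eq (base_subset he) (third_mem_inc_owner hG ht) (Ne.symm hne)).2⟩

lemma blkA_nonempty (hG : Good G) (σ : Idx G ≃ Fin (N + 1)) (v : V) :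
    (blkA σ v).Nonempty :=
  eS_nonempty hG (inc_subset_edgeFinset (base_subset (eA_mem hG v)))

lemma blkB_nonempty (hG : Good G) (σ : Idx G ≃ Fin (N + 1)) (v : V) :
    (blkB σ v).Nonempty := by
  rw [blkB]
  split
  · exact ⟨_, Finset.mem_singleton_self _⟩
  · exact eS_nonempty hG (inc_subset_edgeFinset (base_subset (eB_mem hG v)))

lemma deg2_of_ne (hG : Good G) {v : V} (h1 : G.degree v ≠ 1) : 2 ≤ G.degree v := by
  have := hG.deg_pos v
  omega

lemma blk_disjoint (hG : Good G) (σ : Idx G ≃ Fin (N + 1)) (v : V) :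
    Disjoint (blkA σ v) (blkB σ v) := by
  rw [blkB]
  split
  · rename_i h1
    rw [Finset.disjoint_singleton_right]
    exact ow_not_mem_eS hG h1
  · rename_i h1
    have hAB := eA_ne_eB hG (deg2_of_ne hG h1)
    rw [Finset.disjoint_left]
    intro i hiA hiB
    obtain ⟨f, hf, rfl, hrelA⟩ := eS_shape hG hiA
    have hrelB := co_mem_eS hG hf hiB
    have heAv := base_subset (eA_mem hG v)
    have heBv := base_subset (eB_mem hG v)
    rcases hrelA with rfl | ⟨htA, hfA, hfneA⟩
    · rcases hrelB with h | ⟨htB, hfB, hfneB⟩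
      · exact hAB h
      · obtain ⟨_, hown, _⟩ := blk_third_structure hG (eB_mem hG v) htB
        exact hAB (edge_unique heAv heBv hfB (third_mem_inc_owner hG htB) (Ne.symm hown))
    · rcases hrelB with rfl | ⟨htB, hfB, hfneB⟩
      · obtain ⟨_, hown, _⟩ := blk_third_structure hG (eA_mem hG v) htA
        exact hAB (edge_unique heAv heBv (third_mem_inc_owner hG htA) hfA (Ne.symm hown))
      · exact hAB (third_unique hG heAv heBv htA htB)

lemma ind_union {k : Type} [Field k] {A B : Finset (Fin (N + 1))} (h : Disjoint A B) :
    ind k (A ∪ B) = ind k A + ind k B := by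
  funext i
  simp only [ind_apply, Pi.add_apply, Finset.mem_union]
  by_cases hA : i ∈ A
  · simp [hA, Finset.disjoint_left.mp h hA]
  · by_cases hB : i ∈ B <;> simp [hA, hB]

lemma eA_eq_eB_of_deg1 (hG : Good G) {v : V} (h1 : G.degree v = 1) : eA G v = eB G v := by
  have hcard : (base G v).card ≤ 1 := by
    rw [base_eq_of_ne3 (by rw [h1]; omega), G.card_incidenceFinset_eq_degree, h1]
  exact Finset.card_le_one.mp hcard _ (eA_mem hG v) _ (eB_mem hG v)

lemma eS_eq_blk (hG : Good G) {σ : Idx G ≃ Fin (N + 1)} {e : Sym2 V} {v : V}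
    (he : e ∈ base G v) : eS σ e = blkA σ v ∨ eS σ e = blkB σ v := by
  rcases mem_base_eq hG he with rfl | h
  · exact Or.inl rfl
  · by_cases h1 : G.degree v = 1
    · exact Or.inl (by rw [blkA, eA_eq_eB_of_deg1 hG h1, h])
    · exact Or.inr (by rw [blkB, if_neg h1, h])

lemma mem_base_of_inc {e : Sym2 V} {v : V} (he : e ∈ G.incidenceFinset v)
    (hnt : ¬ IsThird G e) : e ∈ base G v := by
  rw [base]
  split
  · exact Finset.mem_filter.mpr ⟨he, hnt⟩
  · exact he

lemma nonthird_of_mem_base3 {e : Sym2 V} {v : V} (h3 : G.degree v = 3)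
    (he : e ∈ base G v) : ¬ IsThird G e := by
  rw [base, if_pos h3, Finset.mem_filter] at he
  exact he.2

lemma base3_pair (hG : Good G) {v : V} (h3 : G.degree v = 3) :
    base G v = {eA G v, eB G v} := by
  have hne := eA_ne_eB hG (by rw [h3]; omega)
  refine (Finset.eq_of_subset_of_card_le ?_ ?_).symm
  · intro x hx
    simp only [Finset.mem_insert, Finset.mem_singleton] at hx
    rcases hx with rfl | rfl
    · exact eA_mem hG v
    · exact eB_mem hG v
  · rw [card_base3 hG h3, Finset.card_insert_of_notMem (by simpa using hne),
      Finset.card_singleton]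

lemma blkA3 (hG : Good G) {σ : Idx G ≃ Fin (N + 1)} {v : V} (h3 : G.degree v = 3) :
    blkA σ v = {co σ (eA G v)} :=
  eS_nonthird (inc_subset_edgeFinset (base_subset (eA_mem hG v)))
    (nonthird_of_mem_base3 h3 (eA_mem hG v))

lemma blkB3 (hG : Good G) {σ : Idx G ≃ Fin (N + 1)} {v : V} (h3 : G.degree v = 3) :
    blkB σ v = {co σ (eB G v)} := by
  rw [blkB, if_neg (by rw [h3]; omega)]
  exact eS_nonthird (inc_subset_edgeFinset (base_subset (eB_mem hG v)))
    (nonthird_of_mem_base3 h3 (eB_mem hG v))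

lemma eS_blk (hG : Good G) {σ : Idx G ≃ Fin (N + 1)} {e : Sym2 V} {v : V}
    (he : e ∈ G.incidenceFinset v) :
    eS σ e = blkA σ v ∨ eS σ e = blkB σ v ∨
      (G.degree v = 3 ∧ eS σ e = blkA σ v ∪ blkB σ v) := by
  by_cases ht : IsThird G e
  · by_cases hw : owner (G := G) e = v
    · right; right
      have h3 : G.degree v = 3 := hw ▸ (owner_spec ht).1
      refine ⟨h3, ?_⟩
      have hte : e = tedge G v := by rw [← hw]; exact (owner_spec ht).2
      have herase : (G.incidenceFinset v).erase e = base G v := by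
        rw [base_eq_erase hG h3, hte]
      rw [eS_third ht, hw, herase, base3_pair hG h3, Finset.image_insert,
        Finset.image_singleton, blkA3 hG h3, blkB3 hG h3]
      ext i
      simp
    · have h3 : G.degree v ≠ 3 := by
        intro h3
        exact hw (owner_eq hG h3 (third_unique hG he (tedge_mem hG v) ht ⟨v, h3, rfl⟩))
      have hb : e ∈ base G v := by rw [base_eq_of_ne3 h3]; exact he
      exact (eS_eq_blk hG hb).imp id Or.inl
  · exact (eS_eq_blk hG (mem_base_of_inc he ht)).imp id Or.inl

lemma mem_Wv_iff {k : Type} [Field k] {σ : Idx G ≃ Fin (N + 1)} {v : V}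
    {x : Fin (N + 1) → k} :
    x ∈ Wv k σ v ↔ ∃ a b : k, a • ind k (blkA σ v) + b • ind k (blkB σ v) = x :=
  Submodule.mem_span_pair

lemma ind_eS_mem_Wv {k : Type} [Field k] (hG : Good G) {σ : Idx G ≃ Fin (N + 1)}
    {e : Sym2 V} {v : V} (he : e ∈ G.incidenceFinset v) :
    ind k (eS σ e) ∈ Wv k σ v := by
  rcases eS_blk hG (σ := σ) he with h | h | ⟨h3, h⟩
  · rw [h]; exact Submodule.subset_span (by simp)
  · rw [h]; exact Submodule.subset_span (by simp)
  · rw [h, ind_union (blk_disjoint hG σ v)]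
    exact Submodule.add_mem _ (Submodule.subset_span (by simp))
      (Submodule.subset_span (by simp))

lemma comb_eval_left {k : Type} [Field k] {A B : Finset (Fin (N + 1))} (h : Disjoint A B)
    {i : Fin (N + 1)} (hi : i ∈ A) (a b : k) : (a • ind k A + b • ind k B) i = a := by
  simp [ind_apply, hi, Finset.disjoint_left.mp h hi]

lemma comb_eval_right {k : Type} [Field k] {A B : Finset (Fin (N + 1))} (h : Disjoint A B)
    {i : Fin (N + 1)} (hi : i ∈ B) (a b : k) : (a • ind k A + b • ind k B) i = b := by
  simp [ind_apply, hi, Finset.disjoint_right.mp h hi]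

lemma comb_eval_zero {k : Type} [Field k] {A B : Finset (Fin (N + 1))}
    {i : Fin (N + 1)} (hiA : i ∉ A) (hiB : i ∉ B) (a b : k) :
    (a • ind k A + b • ind k B) i = 0 := by
  simp [ind_apply, hiA, hiB]

/-- `u` has a (singleton) non-third block edge whose coordinate lies in the blocks of `v` -/
def Bad (σ : Idx G ≃ Fin (N + 1)) (u v : V) : Prop :=
  ∃ e ∈ base G u, ¬ IsThird G e ∧ co σ e ∈ blkA σ v ∪ blkB σ v

lemma ow_not_mem_blocks (hG : Good G) {σ : Idx G ≃ Fin (N + 1)} {u v : V}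
    (huv : u ≠ v) (h1 : G.degree u = 1) : ow σ u ∉ blkA σ v ∪ blkB σ v := by
  rw [Finset.mem_union]
  rintro (h | h)
  · exact ow_not_mem_eS hG h1 h
  · rw [blkB] at h
    split at h
    · rename_i h1v
      rw [Finset.mem_singleton, ow, ow, dif_pos h1, dif_pos h1v] at h
      have := σ.injective h
      simp only [Sum.inr.injEq, Subtype.mk.injEq] at this
      exact huv this
    · exact ow_not_mem_eS hG h1 h

/-- if a non-third edge of `v`'s blocks "covers" a coordinate `co g` with `g` incident to
a degree-3 vertex `w` whose third edge is a block edge of `u`, then `g` is incident to `v`. -/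
lemma covered_mem_inc (hG : Good G) {σ : Idx G ≃ Fin (N + 1)} {u v : V} {e g : Sym2 V}
    (huv : u ≠ v) (hnadj : ¬ G.Adj u v) (heu : e ∈ base G u) (ht : IsThird G e)
    (hg : g ∈ G.incidenceFinset (owner (G := G) e)) (hge : g ≠ e)
    (hcov : co σ g ∈ blkA σ v ∪ blkB σ v) : g ∈ G.incidenceFinset v := by
  have hgval := owner_erase_valid hG ht hg hge
  obtain ⟨hu3, hwu, hadjuw⟩ := blk_third_structure hG heu ht
  have hw3 := (owner_spec ht).1
  have hcase : ∀ e', e' ∈ base G v → co σ g ∈ eS σ e' → g ∈ G.incidenceFinset v := by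
    intro e' he' hmem
    rcases co_mem_eS hG hgval hmem with rfl | ⟨ht', hg', hge'⟩
    · exact base_subset he'
    · exfalso
      obtain ⟨hv3, hwv, hadjvw⟩ := blk_third_structure hG he' ht'
      by_cases hww : owner (G := G) e = owner (G := G) e'
      · have : e = e' := by rw [(owner_spec ht).2, (owner_spec ht').2, hww]
        subst this
        exact hnadj (edge_eq (base_subset heu) (base_subset he') huv).2
      · exact hG.not_adj33 hw3 ((owner_spec ht').1) (edge_eq hg hg' hww).2
  rw [Finset.mem_union] at hcov
  rcases hcov with h | h
  · exact hcase _ (eA_mem hG v) h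
  · rw [blkB] at h
    split at h
    · rename_i h1v
      rw [Finset.mem_singleton] at h
      exact absurd h (co_ne_ow hgval h1v)
    · exact hcase _ (eB_mem hG v) h

lemma escape (hG : Good G) {σ : Idx G ≃ Fin (N + 1)} {u v : V} {e : Sym2 V}
    (huv : u ≠ v) (hnadj : ¬ G.Adj u v) (hnbad : ¬ Bad σ u v) (heu : e ∈ base G u) :
    ∃ i ∈ eS σ e, i ∉ blkA σ v ∪ blkB σ v := by
  by_cases ht : IsThird G e
  · by_contra hc
    push_neg at hc
    obtain ⟨hu3, hwu, hadjuw⟩ := blk_third_structure hG heu ht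
    have hw3 := (owner_spec ht).1
    have hvw : v ≠ owner (G := G) e := by
      rintro rfl
      exact hnadj hadjuw
    have hcard : 1 < ((G.incidenceFinset (owner (G := G) e)).erase e).card := by
      rw [Finset.card_erase_of_mem (third_mem_inc_owner hG ht),
        G.card_incidenceFinset_eq_degree, hw3]
      omega
    obtain ⟨f, hf, f', hf', hff⟩ := Finset.one_lt_card.mp hcard
    rw [Finset.mem_erase] at hf hf'
    have hfmem : co σ f ∈ eS σ e := by
      rw [eS_third ht, Finset.mem_image]
      exact ⟨f, Finset.mem_erase.mpr hf, rfl⟩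
    have hfmem' : co σ f' ∈ eS σ e := by
      rw [eS_third ht, Finset.mem_image]
      exact ⟨f', Finset.mem_erase.mpr hf', rfl⟩
    have h1 := covered_mem_inc hG huv hnadj heu ht hf.2 hf.1 (hc _ hfmem)
    have h2 := covered_mem_inc hG huv hnadj heu ht hf'.2 hf'.1 (hc _ hfmem')
    exact hff (edge_unique h1 h2 hf.2 hf'.2 hvw)
  · have hval : e ∈ G.edgeFinset ∧ ¬ IsThird G e :=
      ⟨inc_subset_edgeFinset (base_subset heu), ht⟩
    refine ⟨co σ e, by rw [eS_nonthird hval.1 ht]; exact Finset.mem_singleton_self _, ?_⟩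
    intro hmem
    exact hnbad ⟨e, heu, ht, hmem⟩

lemma coef_zero (hG : Good G) {k : Type} [Field k] {σ : Idx G ≃ Fin (N + 1)} {u v : V}
    (huv : u ≠ v) (hnadj : ¬ G.Adj u v) (hnbad : ¬ Bad σ u v) {a b c d : k}
    (hx : a • ind k (blkA σ u) + b • ind k (blkB σ u)
        = c • ind k (blkA σ v) + d • ind k (blkB σ v)) : a = 0 ∧ b = 0 := by
  have hdu := blk_disjoint hG σ u
  constructor
  · obtain ⟨i, hi, hiv⟩ := escape hG huv hnadj hnbad (eA_mem hG u)
    rw [Finset.mem_union] at hiv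
    push_neg at hiv
    have := congrFun hx i
    rwa [comb_eval_left hdu hi, comb_eval_zero hiv.1 hiv.2] at this
  · by_cases h1 : G.degree u = 1
    · have hi : ow σ u ∈ blkB σ u := by rw [blkB, if_pos h1]; exact Finset.mem_singleton_self _
      have hiv := ow_not_mem_blocks hG huv h1 (σ := σ)
      rw [Finset.mem_union] at hiv
      push_neg at hiv
      have := congrFun hx (ow σ u)
      rwa [comb_eval_right hdu hi, comb_eval_zero hiv.1 hiv.2] at this
    · obtain ⟨i, hi, hiv⟩ := escape hG huv hnadj hnbad (eB_mem hG u)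
      rw [Finset.mem_union] at hiv
      push_neg at hiv
      have hib : i ∈ blkB σ u := by rw [blkB, if_neg h1]; exact hi
      have := congrFun hx i
      rwa [comb_eval_right hdu hib, comb_eval_zero hiv.1 hiv.2] at this

lemma not_bad_or (hG : Good G) {σ : Idx G ≃ Fin (N + 1)} {u v : V}
    (huv : u ≠ v) (hnadj : ¬ G.Adj u v) : ¬ Bad σ u v ∨ ¬ Bad σ v u := by
  by_contra hc
  push_neg at hc
  obtain ⟨⟨e, heu, hte, hcove⟩, ⟨f, hfv, htf, hcovf⟩⟩ := hc
  have heval : e ∈ G.edgeFinset ∧ ¬ IsThird G e := ⟨inc_subset_edgeFinset (base_subset heu), hte⟩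
  have hfval : f ∈ G.edgeFinset ∧ ¬ IsThird G f := ⟨inc_subset_edgeFinset (base_subset hfv), htf⟩
  have analyze : ∀ (x y : V) (g : Sym2 V), x ≠ y → ¬ G.Adj x y →
      g ∈ base G x → ¬ IsThird G g → co σ g ∈ blkA σ y ∪ blkB σ y →
      ∃ w, G.degree w = 3 ∧ G.Adj x w ∧ G.Adj y w ∧ tedge G w ∈ G.incidenceFinset y := by
    intro x y g hxy hnadjxy hgx hntg hcov
    have hgval : g ∈ G.edgeFinset ∧ ¬ IsThird G g :=
      ⟨inc_subset_edgeFinset (base_subset hgx), hntg⟩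
    have hcase : ∀ e', e' ∈ base G y → co σ g ∈ eS σ e' →
        ∃ w, G.degree w = 3 ∧ G.Adj x w ∧ G.Adj y w ∧ tedge G w ∈ G.incidenceFinset y := by
      intro e' he' hmem
      rcases co_mem_eS hG hgval hmem with rfl | ⟨ht', hg', hge'⟩
      · exact absurd (edge_eq (base_subset hgx) (base_subset he') hxy).2 hnadjxy
      · obtain ⟨hy3, hwy, hadjyw⟩ := blk_third_structure hG he' ht'
        have hw3 := (owner_spec ht').1
        refine ⟨owner (G := G) e', hw3, ?_, hadjyw, ?_⟩
        · have hxw : x ≠ owner (G := G) e' := by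
            rintro rfl
            exact hnadjxy hadjyw.symm
          exact (edge_eq (base_subset hgx) hg' hxw).2
        · rw [← (owner_spec ht').2]
          exact base_subset he'
    rw [Finset.mem_union] at hcov
    rcases hcov with h | h
    · exact hcase _ (eA_mem hG y) h
    · rw [blkB] at h
      split at h
      · rename_i h1y
        exact absurd (Finset.mem_singleton.mp h) (co_ne_ow hgval h1y)
      · exact hcase _ (eB_mem hG y) h
  obtain ⟨w₁, hw₁3, hadjuw₁, hadjvw₁, hw₁v⟩ := analyze u v e huv hnadj heu hte hcove
  obtain ⟨w₂, hw₂3, hadjvw₂, hadjuw₂, hw₂u⟩ :=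
    analyze v u f (Ne.symm huv) (fun h => hnadj h.symm) hfv htf hcovf
  by_cases hww : w₁ = w₂
  · subst hww
    exact hnadj (edge_eq hw₂u hw₁v huv).2
  · exact hG.not_common33 hw₁3 hw₂3 hww hadjuw₁.symm hadjuw₂

lemma W_inf_eq_bot {k : Type} [Field k] (hG : Good G) (σ : Idx G ≃ Fin (N + 1)) {u v : V}
    (huv : u ≠ v) (hnadj : ¬ G.Adj u v) : Wv k σ u ⊓ Wv k σ v = ⊥ := by
  rw [eq_bot_iff]
  rintro x hx
  rw [Submodule.mem_inf] at hx
  obtain ⟨a, b, hab⟩ := mem_Wv_iff.mp hx.1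
  obtain ⟨c, d, hcd⟩ := mem_Wv_iff.mp hx.2
  rcases not_bad_or hG (σ := σ) huv hnadj with h | h
  · obtain ⟨ha, hb⟩ := coef_zero hG huv hnadj h (hab.trans hcd.symm)
    rw [Submodule.mem_bot, ← hab, ha, hb]
    simp
  · obtain ⟨hc, hd⟩ := coef_zero hG (Ne.symm huv) (fun h' => hnadj h'.symm) h
      (hcd.trans hab.symm)
    rw [Submodule.mem_bot, ← hcd, hc, hd]
    simp

lemma eS_blk2 (hG : Good G) {σ : Idx G ≃ Fin (N + 1)} {e : Sym2 V} {v : V}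
    (he : e ∈ G.incidenceFinset v) :
    e ∈ base G v ∨ (G.degree v = 3 ∧ IsThird G e ∧ owner (G := G) e = v ∧
      eS σ e = blkA σ v ∪ blkB σ v) := by
  by_cases ht : IsThird G e
  · by_cases hw : owner (G := G) e = v
    · right
      have h3 : G.degree v = 3 := hw ▸ (owner_spec ht).1
      refine ⟨h3, ht, hw, ?_⟩
      have hte : e = tedge G v := by rw [← hw]; exact (owner_spec ht).2
      have herase : (G.incidenceFinset v).erase e = base G v := by
        rw [base_eq_erase hG h3, hte]
      rw [eS_third ht, hw, herase, base3_pair hG h3, Finset.image_insert,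
        Finset.image_singleton, blkA3 hG h3, blkB3 hG h3]
      ext i
      simp
    · left
      have h3 : G.degree v ≠ 3 := by
        intro h3
        exact hw (owner_eq hG h3 (third_unique hG he (tedge_mem hG v) ht ⟨v, h3, rfl⟩))
      rw [base_eq_of_ne3 h3]
      exact he
  · exact Or.inl (mem_base_of_inc he ht)

lemma decomp (hG : Good G) {σ : Idx G ≃ Fin (N + 1)} {u : V} {e : Sym2 V}
    (he : e ∈ base G u) {k : Type} [Field k] {x : Fin (N + 1) → k} (hx : x ∈ Wv k σ u) :
    ∃ (T : Finset (Fin (N + 1))) (p q : k),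
      x = p • ind k (eS σ e) + q • ind k T ∧ Disjoint (eS σ e) T ∧
      ((T = {ow σ u} ∧ G.degree u = 1) ∨ ∃ e₂, e₂ ∈ base G u ∧ e₂ ≠ e ∧ T = eS σ e₂) := by
  obtain ⟨a, b, hab⟩ := mem_Wv_iff.mp hx
  have key : ∀ h : e = eA G u,
      ∃ (T : Finset (Fin (N + 1))) (p q : k),
      x = p • ind k (eS σ e) + q • ind k T ∧ Disjoint (eS σ e) T ∧
      ((T = {ow σ u} ∧ G.degree u = 1) ∨ ∃ e₂, e₂ ∈ base G u ∧ e₂ ≠ e ∧ T = eS σ e₂) := by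
    intro h
    have hblkA : blkA σ u = eS σ e := by rw [blkA, ← h]
    refine ⟨blkB σ u, a, b, by rw [← hab, hblkA], hblkA ▸ blk_disjoint hG σ u, ?_⟩
    by_cases h1 : G.degree u = 1
    · exact Or.inl ⟨by rw [blkB, if_pos h1], h1⟩
    · refine Or.inr ⟨eB G u, eB_mem hG u, ?_, by rw [blkB, if_neg h1]⟩
      rw [h]
      exact (eA_ne_eB hG (deg2_of_ne hG h1)).symm
  rcases mem_base_eq hG he with h | h
  · exact key h
  · by_cases h1 : G.degree u = 1
    · exact key (by rw [h, ← eA_eq_eB_of_deg1 hG h1])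
    · have hblkB : blkB σ u = eS σ e := by rw [blkB, if_neg h1, ← h]
      refine ⟨blkA σ u, b, a, by rw [← hab, hblkB]; exact (add_comm _ _),
        hblkB ▸ (blk_disjoint hG σ u).symm, ?_⟩
      refine Or.inr ⟨eA G u, eA_mem hG u, ?_, rfl⟩
      rw [h]
      exact eA_ne_eB hG (deg2_of_ne hG h1)

lemma T_disjoint (hG : Good G) {σ : Idx G ≃ Fin (N + 1)} {u v : V} {e : Sym2 V}
    (hadj : G.Adj u v) (he : e = s(u, v)) {Tu Tv : Finset (Fin (N + 1))}
    (hTu : (Tu = {ow σ u} ∧ G.degree u = 1) ∨ ∃ e₂, e₂ ∈ base G u ∧ e₂ ≠ e ∧ Tu = eS σ e₂)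
    (hTv : (Tv = {ow σ v} ∧ G.degree v = 1) ∨ ∃ f₂, f₂ ∈ base G v ∧ f₂ ≠ e ∧ Tv = eS σ f₂) :
    Disjoint Tu Tv := by
  have huv : u ≠ v := hadj.ne
  rcases hTu with ⟨rfl, h1u⟩ | ⟨e₂, he₂, hne₂, rfl⟩
  · rw [Finset.disjoint_singleton_left]
    rcases hTv with ⟨rfl, h1v⟩ | ⟨f₂, hf₂, hnf₂, rfl⟩
    · rw [Finset.mem_singleton, ow, ow, dif_pos h1u, dif_pos h1v]
      intro hh
      have := σ.injective hh
      simp only [Sum.inr.injEq, Subtype.mk.injEq] at this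
      exact huv this
    · exact ow_not_mem_eS hG h1u
  · rcases hTv with ⟨rfl, h1v⟩ | ⟨f₂, hf₂, hnf₂, rfl⟩
    · rw [Finset.disjoint_singleton_right]
      exact ow_not_mem_eS hG h1v
    · rw [Finset.disjoint_left]
      intro i hi hi'
      obtain ⟨h, hhval, rfl, _⟩ := eS_shape hG hi
      have hrel2 := co_mem_eS hG hhval hi
      have hrel2' := co_mem_eS hG hhval hi'
      have hbu := base_subset he₂
      have hbv := base_subset hf₂
      rcases hrel2 with rfl | ⟨ht₂, hh₂, hne⟩
      · rcases hrel2' with rfl | ⟨ht₂', hh₂', hne'⟩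
        · exact hne₂ ((edge_eq hbu hbv huv).1.trans he.symm)
        · -- h = e₂ incident to u and to owner f₂ (deg 3)
          obtain ⟨hv3, hwv, hadjvw⟩ := blk_third_structure hG hf₂ ht₂'
          by_cases huw : u = owner (G := G) f₂
          · -- then f₂ = tedge u is incident to both u and v, so f₂ = e
            have hf₂u : f₂ ∈ G.incidenceFinset u := by
              rw [huw]; exact third_mem_inc_owner hG ht₂'
            exact hnf₂ ((edge_eq hf₂u hbv huv).1.trans he.symm)
          · exact hG.no_triangle hadj ((edge_eq hbu hh₂' huw).2) hadjvw
      · rcases hrel2' with rfl | ⟨ht₂', hh₂', hne'⟩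
        · obtain ⟨hu3, hwu, hadjuw⟩ := blk_third_structure hG he₂ ht₂
          by_cases hvw : v = owner (G := G) e₂
          · have he₂v : e₂ ∈ G.incidenceFinset v := by
              rw [hvw]; exact third_mem_inc_owner hG ht₂
            exact hne₂ ((edge_eq hbu he₂v huv).1.trans he.symm)
          · exact hG.no_triangle hadj hadjuw ((edge_eq hbv hh₂ hvw).2)
        · by_cases hww : owner (G := G) e₂ = owner (G := G) f₂
          · have : e₂ = f₂ := by rw [(owner_spec ht₂).2, (owner_spec ht₂').2, hww]
            subst this
            exact hne₂ ((edge_eq hbu hbv huv).1.trans he.symm)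
          · exact hG.not_adj33 (owner_spec ht₂).1 (owner_spec ht₂').1
              (edge_eq hh₂ hh₂' hww).2

lemma T_nonempty (hG : Good G) {σ : Idx G ≃ Fin (N + 1)} {u : V} {e : Sym2 V}
    {Tu : Finset (Fin (N + 1))}
    (hTu : (Tu = {ow σ u} ∧ G.degree u = 1) ∨ ∃ e₂, e₂ ∈ base G u ∧ e₂ ≠ e ∧ Tu = eS σ e₂) :
    Tu.Nonempty := by
  rcases hTu with ⟨rfl, _⟩ | ⟨e₂, he₂, _, rfl⟩
  · exact ⟨_, Finset.mem_singleton_self _⟩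
  · exact eS_nonempty hG (inc_subset_edgeFinset (base_subset he₂))

/-- mixed case: `e` is a plain block edge of `u` and the third edge of a degree-3 vertex `v` -/
lemma single_double_case {k : Type} [Field k] (hG : Good G) {σ : Idx G ≃ Fin (N + 1)}
    {u v : V} {e : Sym2 V} {x : Fin (N + 1) → k}
    (hbu : e ∈ base G u) (h3v : G.degree v = 3)
    (hSv : eS σ e = blkA σ v ∪ blkB σ v)
    (hxu : x ∈ Wv k σ u) (hxv : x ∈ Wv k σ v) :
    x ∈ Submodule.span k {ind k (eS σ e)} := by
  obtain ⟨Tu, p, q, hxu', hdu, hshu⟩ := decomp hG hbu hxu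
  obtain ⟨c, d, hxv'⟩ := mem_Wv_iff.mp hxv
  have hdv := blk_disjoint hG σ v
  have hiA : co σ (eA G v) ∈ blkA σ v := by
    rw [blkA3 hG h3v]; exact Finset.mem_singleton_self _
  have hiB : co σ (eB G v) ∈ blkB σ v := by
    rw [blkB3 hG h3v]; exact Finset.mem_singleton_self _
  have hiAS : co σ (eA G v) ∈ eS σ e := by rw [hSv]; exact Finset.mem_union_left _ hiA
  have hiBS : co σ (eB G v) ∈ eS σ e := by rw [hSv]; exact Finset.mem_union_right _ hiB
  have e1 : x (co σ (eA G v)) = p := by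
    rw [hxu']; exact comb_eval_left hdu hiAS p q
  have e2 : x (co σ (eA G v)) = c := by
    rw [← hxv']; exact comb_eval_left hdv hiA c d
  have e3 : x (co σ (eB G v)) = p := by
    rw [hxu']; exact comb_eval_left hdu hiBS p q
  have e4 : x (co σ (eB G v)) = d := by
    rw [← hxv']; exact comb_eval_right hdv hiB c d
  refine Submodule.mem_span_singleton.mpr ⟨p, ?_⟩
  rw [← hxv', hSv, ind_union hdv, ← e2, e1, ← e4, e3, smul_add]

lemma single_single_case {k : Type} [Field k] (hG : Good G) {σ : Idx G ≃ Fin (N + 1)}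
    {u v : V} {e : Sym2 V} {x : Fin (N + 1) → k} (hadj : G.Adj u v) (he : e = s(u, v))
    (hbu : e ∈ base G u) (hbv : e ∈ base G v)
    (hxu : x ∈ Wv k σ u) (hxv : x ∈ Wv k σ v) :
    x ∈ Submodule.span k {ind k (eS σ e)} := by
  obtain ⟨Tu, p, q, hxu', hdu, hshu⟩ := decomp hG hbu hxu
  obtain ⟨Tv, r, s', hxv', hdv, hshv⟩ := decomp hG hbv hxv
  have hdTT : Disjoint Tu Tv := T_disjoint hG hadj he hshu hshv
  obtain ⟨i, hi⟩ := T_nonempty hG hshu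
  have h1 : x i = q := by rw [hxu']; exact comb_eval_right hdu hi p q
  have h2 : x i = 0 := by
    rw [hxv']
    exact comb_eval_zero (Finset.disjoint_right.mp hdu hi)
      (Finset.disjoint_left.mp hdTT hi) r s'
  have hq : q = 0 := by rw [← h1, h2]
  refine Submodule.mem_span_singleton.mpr ⟨p, ?_⟩
  rw [hxu', hq, zero_smul, add_zero]

lemma W_inf_adj {k : Type} [Field k] (hG : Good G) (σ : Idx G ≃ Fin (N + 1)) {u v : V}
    (hadj : G.Adj u v) :
    Wv k σ u ⊓ Wv k σ v = Submodule.span k {ind k (eS σ s(u, v))} := by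
  have heE : s(u, v) ∈ G.edgeFinset := by
    rw [SimpleGraph.mem_edgeFinset, SimpleGraph.mem_edgeSet]; exact hadj
  have heu : s(u, v) ∈ G.incidenceFinset u := mem_inc.mpr ⟨heE, by simp⟩
  have hev : s(u, v) ∈ G.incidenceFinset v := mem_inc.mpr ⟨heE, by simp⟩
  apply le_antisymm
  · rintro x hx
    rw [Submodule.mem_inf] at hx
    rcases eS_blk2 (σ := σ) hG heu with hbu | ⟨h3u, htu, hou, hSu⟩
    · rcases eS_blk2 (σ := σ) hG hev with hbv | ⟨h3v, htv, hov, hSv⟩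
      · exact single_single_case hG hadj rfl hbu hbv hx.1 hx.2
      · exact single_double_case hG hbu h3v hSv hx.1 hx.2
    · rcases eS_blk2 (σ := σ) hG hev with hbv | ⟨h3v, htv, hov, hSv⟩
      · have : s(u, v) = s(v, u) := Sym2.eq_swap
        rw [this] at hSu hbv ⊢
        exact single_double_case hG hbv h3u hSu hx.2 hx.1
      · exact (hG.not_adj33 h3u h3v hadj).elim
  · rw [Submodule.span_le, Set.singleton_subset_iff]
    exact Submodule.mem_inf.mpr ⟨ind_eS_mem_Wv hG heu, ind_eS_mem_Wv hG hev⟩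

lemma ind_ne_zero {k : Type} [Field k] {A : Finset (Fin (N + 1))} (h : A.Nonempty) :
    ind k A ≠ 0 := by
  obtain ⟨i, hi⟩ := h
  intro hz
  have := congrFun hz i
  rw [ind_apply, if_pos hi] at this
  exact one_ne_zero this

lemma W_inf_adj_finrank {k : Type} [Field k] (hG : Good G) (σ : Idx G ≃ Fin (N + 1))
    {u v : V} (hadj : G.Adj u v) :
    Module.finrank k ↥(Wv k σ u ⊓ Wv k σ v) = 1 := by
  rw [W_inf_adj hG σ hadj]
  exact finrank_span_singleton (ind_ne_zero (eS_nonempty hG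
    (by rw [SimpleGraph.mem_edgeFinset, SimpleGraph.mem_edgeSet]; exact hadj)))

lemma W_inf_adj_ne_bot {k : Type} [Field k] (hG : Good G) (σ : Idx G ≃ Fin (N + 1))
    {u v : V} (hadj : G.Adj u v) : Wv k σ u ⊓ Wv k σ v ≠ ⊥ := by
  rw [W_inf_adj hG σ hadj]
  simpa [Submodule.span_singleton_eq_bot] using ind_ne_zero (k := k) (eS_nonempty hG (σ := σ)
    (by rw [SimpleGraph.mem_edgeFinset, SimpleGraph.mem_edgeSet]; exact hadj))

lemma exists_endpoint {e : Sym2 V} (he : e ∈ G.edgeFinset) :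
    ∃ a, e ∈ G.incidenceFinset a := by
  induction e using Sym2.ind with
  | _ a b => exact ⟨a, mem_inc.mpr ⟨he, by simp⟩⟩

lemma W_supr_top {k : Type} [Field k] (hG : Good G) (σ : Idx G ≃ Fin (N + 1)) :
    (⨆ v, Wv k σ v) = ⊤ := by
  rw [eq_top_iff]
  intro x _
  rw [pi_eq_sum_univ x]
  apply Submodule.sum_mem
  intro i _
  apply Submodule.smul_mem
  have hδ : (fun j => if i = j then (1 : k) else 0) = ind k {i} := by
    funext j
    by_cases h : i = j
    · simp [ind_apply, h]
    · simp [ind_apply, h, Ne.symm h]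
  rw [hδ]
  obtain ⟨s, rfl⟩ := σ.surjective i
  cases s with
  | inl p =>
      have hco : co σ p.1 = σ (Sum.inl p) := by rw [co, dif_pos p.2]
      have hes : eS σ p.1 = {σ (Sum.inl p)} := by rw [eS_nonthird p.2.1 p.2.2, hco]
      obtain ⟨a, ha⟩ := exists_endpoint p.2.1
      have hmem := ind_eS_mem_Wv (k := k) hG (σ := σ) ha
      rw [hes] at hmem
      exact le_iSup (fun v => Wv k σ v) a hmem
  | inr q =>
      have how : ow σ q.1 = σ (Sum.inr q) := by rw [ow, dif_pos q.2]
      have hmem : ind k {σ (Sum.inr q)} ∈ Wv k σ q.1 := by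
        have hb : blkB σ q.1 = {ow σ q.1} := by rw [blkB, if_pos q.2]
        rw [← how, ← hb]
        exact Submodule.subset_span (by simp)
      exact le_iSup (fun v => Wv k σ v) q.1 hmem

lemma card_Idx (hG : Good G) :
    Fintype.card (Idx G) + G.edgeFinset.card = 2 * Fintype.card V := by
  classical
  set P1 := Finset.univ.filter (fun v : V => G.degree v = 1) with hP1
  set P2 := Finset.univ.filter (fun v : V => G.degree v = 2) with hP2
  set P3 := Finset.univ.filter (fun v : V => G.degree v = 3) with hP3
  have sum_c : ∀ (c : ℕ) (p : V → Prop) (_ : DecidablePred p),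
      ∑ v, (if p v then c else 0) = c * (Finset.univ.filter p).card := by
    intro c p hp
    rw [← Finset.sum_filter, Finset.sum_const, smul_eq_mul, mul_comm]
  have hdegsum : ∑ v, G.degree v = 2 * G.edgeFinset.card :=
    G.sum_degrees_eq_twice_card_edges
  have hE : ∑ v, G.degree v = 1 * P1.card + (2 * P2.card + 3 * P3.card) := by
    have hv : ∀ v ∈ Finset.univ, G.degree v =
        (if G.degree v = 1 then 1 else 0) +
        ((if G.degree v = 2 then 2 else 0) + (if G.degree v = 3 then 3 else 0)) := by
      intro v _
      have h1 := hG.deg_pos v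
      have h2 := hG.deg_le v
      have : G.degree v = 1 ∨ G.degree v = 2 ∨ G.degree v = 3 := by omega
      rcases this with h | h | h <;> simp [h]
    rw [Finset.sum_congr rfl hv, Finset.sum_add_distrib, Finset.sum_add_distrib,
      sum_c 1 _ _, sum_c 2 _ _, sum_c 3 _ _]
  have hV : Fintype.card V = 1 * P1.card + (1 * P2.card + 1 * P3.card) := by
    have hv : ∀ v ∈ Finset.univ, (1 : ℕ) =
        (if G.degree v = 1 then 1 else 0) +
        ((if G.degree v = 2 then 1 else 0) + (if G.degree v = 3 then 1 else 0)) := by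
      intro v _
      have h1 := hG.deg_pos v
      have h2 := hG.deg_le v
      have : G.degree v = 1 ∨ G.degree v = 2 ∨ G.degree v = 3 := by omega
      rcases this with h | h | h <;> simp [h]
    have h0 : Fintype.card V = ∑ _v : V, 1 := by
      rw [← Finset.card_univ, Finset.card_eq_sum_ones]
    rw [h0, Finset.sum_congr rfl hv, Finset.sum_add_distrib, Finset.sum_add_distrib,
      sum_c 1 _ _, sum_c 1 _ _, sum_c 1 _ _]
  have hT : (G.edgeFinset.filter (fun e => IsThird G e)).card = P3.card := by
    apply Finset.card_bij (fun e _ => owner (G := G) e)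
    · intro e he
      rw [Finset.mem_filter] at he
      rw [hP3, Finset.mem_filter]
      exact ⟨Finset.mem_univ _, (owner_spec he.2).1⟩
    · intro e he e' he' hee
      rw [Finset.mem_filter] at he he'
      rw [(owner_spec he.2).2, (owner_spec he'.2).2, hee]
    · intro w hw
      rw [hP3, Finset.mem_filter] at hw
      refine ⟨tedge G w, Finset.mem_filter.mpr ⟨inc_subset_edgeFinset (tedge_mem hG w),
        ⟨w, hw.2, rfl⟩⟩, owner_eq hG hw.2 rfl⟩
  have hsplit := Finset.card_filter_add_card_filter_not
    (s := G.edgeFinset) (p := fun e => IsThird G e)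
  have hIdx : Fintype.card (Idx G)
      = (G.edgeFinset.filter (fun e => ¬ IsThird G e)).card + P1.card := by
    rw [Fintype.card_sum]
    congr 1
    · rw [Fintype.card_subtype]
      congr 1
      ext e
      simp only [Finset.mem_filter, Finset.mem_univ, true_and]
    · rw [Fintype.card_subtype]
  omega

end Graph

/-- Let `G` be a finite simple connected graph with `d ≥ 2` vertices and
`m` edges in which every vertex has degree at most 3 and some vertex has degree less than 3,
the graph distance between any two distinct vertices of degree 3 is at least 3, and `G`
contains no 3-cycles; set `g = m − d + 1` and `n = d − g`.  Then there exists a family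
`(W_v)` of 2-dimensional linear subspaces of `k^{n+1}` (affine cones of lines in `P^n`),
pairwise distinct, spanning `k^{n+1}`, with `W_u ∩ W_v ≠ 0` iff `u ~ v` (and then
1-dimensional), such that each vanishing ideal `I(W_v)` is generated by linear forms each
of which is a variable `x_i` or a binomial `x_j − x_k`. -/
theorem graphCurve_embedding_lines_cut_out_by_variables_and_binomials
    {V : Type} [Fintype V] [DecidableEq V] (G : SimpleGraph V) [DecidableRel G.Adj]
    (hconn : G.Connected)
    (hdeg : ∀ v : V, G.degree v ≤ 3)
    (hsub : ∃ v : V, G.degree v < 3)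
    (hdist : ∀ u v : V, G.degree u = 3 → G.degree v = 3 → u ≠ v → 3 ≤ G.dist u v)
    (htri : G.CliqueFree 3)
    (d m g n : ℕ)
    (hd : Fintype.card V = d)
    (hm : G.edgeFinset.card = m)
    (hg : m + 1 = d + g)
    (hd2 : 2 ≤ d)
    (hn : d = n + g)
    (k : Type) [Field k] [IsAlgClosed k] [CharZero k] :
    ∃ W : V → Submodule k (Fin (n + 1) → k),
      (∀ v, Module.finrank k (W v) = 2) ∧
      Function.Injective W ∧
      (⨆ v, W v) = ⊤ ∧
      (∀ u v : V, u ≠ v → (W u ⊓ W v ≠ ⊥ ↔ G.Adj u v)) ∧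
      (∀ u v : V, G.Adj u v → Module.finrank k ↥(W u ⊓ W v) = 1) ∧
      (∀ v : V, ∃ S : Set (MvPolynomial (Fin (n + 1)) k),
        (∀ p ∈ S, (∃ i, p = X i) ∨ ∃ j l, j ≠ l ∧ p = X j - X l) ∧
        Ideal.span S = vanishingIdeal k (n + 1) (W v : Set (Fin (n + 1) → k))) := by
  have hNV : Nonempty V := by
    rw [← Fintype.card_pos_iff]
    omega
  have hG : Good G := ⟨hconn, hdeg, hdist, htri, by omega⟩
  have hcard : Fintype.card (Idx G) = n + 1 := by
    have := card_Idx hG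
    omega
  let σ : Idx G ≃ Fin (n + 1) := Fintype.equivFinOfCardEq hcard
  refine ⟨Wv k σ, ?_, ?_, ?_, ?_, ?_, ?_⟩
  · intro v
    exact finrank_pairSpan (blkA_nonempty hG σ v) (blkB_nonempty hG σ v)
      (blk_disjoint hG σ v)
  · intro u v huv
    by_contra hne
    have h2 := finrank_pairSpan (k := k) (blkA_nonempty hG σ v) (blkB_nonempty hG σ v)
      (blk_disjoint hG σ v)
    by_cases hadj : G.Adj u v
    · have h1 := W_inf_adj_finrank (k := k) hG σ hadj
      rw [huv, inf_idem] at h1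
      rw [show Submodule.span k {ind k (blkA σ v), ind k (blkB σ v)} = Wv k σ v from rfl]
        at h2
      omega
    · have h1 := W_inf_eq_bot (k := k) hG σ hne hadj
      rw [huv, inf_idem] at h1
      rw [show Submodule.span k {ind k (blkA σ v), ind k (blkB σ v)} = Wv k σ v from rfl,
        h1, finrank_bot] at h2
      omega
  · exact W_supr_top hG σ
  · intro u v huv
    constructor
    · intro hne
      by_contra hadj
      exact hne (W_inf_eq_bot hG σ huv hadj)
    · exact fun hadj => W_inf_adj_ne_bot hG σ hadj
  · intro u v hadj
    exact W_inf_adj_finrank hG σ hadj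
  · intro v
    exact pairSpan_vanishingIdeal (blkA_nonempty hG σ v) (blkB_nonempty hG σ v)
      (blk_disjoint hG σ v)
end

section
/- Let S = k[x_1, …, x_n] be a polynomial ring over a field k. Let A and B be disjoint subsets of the set of variables, let L_I be the ideal generated by the variables in A, and let L_J be the ideal generated by the variables in B. Let Q_J be an ideal generated by a set of monomials of degree 2, none of which is divisible by any variable in B. Let Q_I be an ideal with Q_I ⊆ L_J + Q_J, and assume Q_J ⊆ L_I + Q_I. Set I = L_I + Q_I and J = L_J + Q_J. Then I ∩ J = L_I·L_J + Q_I + Q_J. -/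
open MvPolynomial

set_option maxHeartbeats 1000000 in
/-- Let `S = k[x_1, …, x_n]` be a polynomial ring over a field `k`.  Let
`A` and `B` be disjoint sets of variables, `L_I = (A)`, `L_J = (B)`.  Let `Q_J` be generated
by a set of degree-2 monomials none of which is divisible by a variable in `B`, and let
`Q_I` be an ideal with `Q_I ⊆ L_J + Q_J` and `Q_J ⊆ L_I + Q_I`.  Setting `I = L_I + Q_I`
and `J = L_J + Q_J`, one has `I ∩ J = L_I·L_J + Q_I + Q_J`. -/
theorem ideal_inter_eq_product_add
    {k : Type} [Field k] (n : ℕ)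
    (A B : Set (Fin n)) (hAB : Disjoint A B)
    (LI LJ QI QJ : Ideal (MvPolynomial (Fin n) k))
    (hLI : LI = Ideal.span (MvPolynomial.X '' A))
    (hLJ : LJ = Ideal.span (MvPolynomial.X '' B))
    (M : Set (MvPolynomial (Fin n) k))
    (hMmon : ∀ p ∈ M, ∃ i j : Fin n, i ∉ B ∧ j ∉ B ∧ p = X i * X j)
    (hQJ : QJ = Ideal.span M)
    (hQI : QI ≤ LJ + QJ)
    (hQJI : QJ ≤ LI + QI)
    (I J : Ideal (MvPolynomial (Fin n) k))
    (hI : I = LI + QI) (hJ : J = LJ + QJ) :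
    I ⊓ J = LI * LJ + QI + QJ := by
  classical
  -- π : substitution sending the variables of B to 0
  set π : MvPolynomial (Fin n) k →ₐ[k] MvPolynomial (Fin n) k :=
    MvPolynomial.aeval (fun i => if i ∈ B then 0 else X i) with hπdef
  have hπX : ∀ i : Fin n, π (X i) = if i ∈ B then 0 else X i := fun i => aeval_X _ i
  -- π kills LJ
  have hLJ0 : ∀ f ∈ LJ, π f = 0 := by
    intro f hf
    have : LJ ≤ Ideal.comap π.toRingHom ⊥ := by
      rw [hLJ, Ideal.span_le]
      rintro _ ⟨b, hb, rfl⟩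
      show π (X b) ∈ (⊥ : Ideal (MvPolynomial (Fin n) k))
      rw [hπX, if_pos hb]
      exact Ideal.zero_mem _
    exact Ideal.mem_bot.mp (Ideal.mem_comap.mp (this hf))
  -- π preserves QJ
  have hQJπ : ∀ f ∈ QJ, π f ∈ QJ := by
    rw [hQJ]
    intro f hf
    have : Ideal.span M ≤ Ideal.comap π.toRingHom (Ideal.span M) := by
      rw [Ideal.span_le]
      intro p hp
      obtain ⟨i, j, hi, hj, rfl⟩ := hMmon p hp
      show π (X i * X j) ∈ Ideal.span M
      rw [map_mul, hπX, hπX, if_neg hi, if_neg hj]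
      exact Ideal.subset_span hp
    exact Ideal.mem_comap.mp (this hf)
  -- π preserves LI
  have hLIπ : ∀ f ∈ LI, π f ∈ LI := by
    rw [hLI]
    intro f hf
    have : Ideal.span (X '' A) ≤ Ideal.comap π.toRingHom (Ideal.span (X '' A)) := by
      rw [Ideal.span_le]
      rintro _ ⟨a, ha, rfl⟩
      have hab : a ∉ B := fun hb => (hAB.le_bot ⟨ha, hb⟩)
      show π (X a) ∈ Ideal.span (X '' A)
      rw [hπX, if_neg hab]
      exact Ideal.subset_span ⟨a, ha, rfl⟩
    exact Ideal.mem_comap.mp (this hf)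
  -- for every f, f - π f ∈ LJ
  have hsub : ∀ f : MvPolynomial (Fin n) k, f - π f ∈ LJ := by
    intro f
    induction f using MvPolynomial.induction_on with
    | C a => simp [aeval_C]
    | add p q hp hq =>
        have := Ideal.add_mem LJ hp hq
        simpa [sub_add_sub_comm] using this
    | mul_X p i hp =>
        by_cases hi : i ∈ B
        · have hXi : X i ∈ LJ := by
            rw [hLJ]; exact Ideal.subset_span ⟨i, hi, rfl⟩
          have : p * X i - π (p * X i) = p * X i - π p * π (X i) := by rw [map_mul]
          rw [this, hπX, if_pos hi, mul_zero, sub_zero]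
          exact Ideal.mul_mem_left _ _ hXi
        · have : p * X i - π (p * X i) = (p - π p) * X i := by
            rw [map_mul, hπX, if_neg hi, sub_mul]
          rw [this]
          exact Ideal.mul_mem_right _ _ hp
  -- key claim: f ∈ LI → f - π f ∈ LI * LJ
  have hclaim : ∀ f ∈ LI, f - π f ∈ LI * LJ := by
    intro f hf
    rw [hLI] at hf
    induction hf using Submodule.span_induction with
    | mem x hx =>
        obtain ⟨a, ha, rfl⟩ := hx
        have hab : a ∉ B := fun hb => (hAB.le_bot ⟨ha, hb⟩)
        simp [hπX, if_neg hab]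
    | zero => simp
    | add x y hx hy hx' hy' =>
        have := Ideal.add_mem (LI * LJ) hx' hy'
        simpa [sub_add_sub_comm, map_add] using this
    | smul r x hx hx' =>
        have hxLI : x ∈ LI := by rw [hLI]; exact hx
        have hπx : π x ∈ LI := hLIπ x hxLI
        have key : r • x - π (r • x) = r * (x - π x) + π x * (r - π r) := by
          simp only [smul_eq_mul, map_mul]
          ring
        rw [key]
        exact Ideal.add_mem _ (Ideal.mul_mem_left _ _ hx')
          (Ideal.mul_mem_mul hπx (hsub r))
  apply le_antisymm
  · -- I ⊓ J ≤ LI*LJ + QI + QJ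
    intro f hf
    obtain ⟨hfI, hfJ⟩ := Submodule.mem_inf.mp hf
    rw [hI, Submodule.add_eq_sup, Submodule.mem_sup] at hfI
    obtain ⟨a, ha, q, hq, rfl⟩ := hfI
    have haJ : a ∈ J := by
      have hqJ : q ∈ J := by
        rw [hJ]; exact hQI hq
      have := Ideal.sub_mem J hfJ hqJ
      simpa using this
    rw [hJ, Submodule.add_eq_sup, Submodule.mem_sup] at haJ
    obtain ⟨b, hb, m, hm, hbm⟩ := haJ
    have hπa : π a ∈ QJ := by
      have : π a = π b + π m := by rw [← map_add, hbm]
      rw [this, hLJ0 b hb, zero_add]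
      exact hQJπ m hm
    have hdecomp : a + q = (a - π a) + π a + q := by ring
    rw [hdecomp]
    rw [Submodule.add_eq_sup, Submodule.add_eq_sup]
    refine Ideal.add_mem _ (Ideal.add_mem _ ?_ ?_) ?_
    · exact Ideal.mem_sup_left (Ideal.mem_sup_left (hclaim a ha))
    · exact Ideal.mem_sup_right hπa
    · exact Ideal.mem_sup_left (Ideal.mem_sup_right hq)
  · -- LI*LJ + QI + QJ ≤ I ⊓ J
    rw [Submodule.add_eq_sup] at hQI hQJI
    refine le_inf ?_ ?_
    · rw [hI, Submodule.add_eq_sup, Submodule.add_eq_sup, Submodule.add_eq_sup]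
      refine sup_le (sup_le ?_ ?_) ?_
      · exact le_trans Ideal.mul_le_left le_sup_left
      · exact le_sup_right
      · exact hQJI
    · rw [hJ, Submodule.add_eq_sup, Submodule.add_eq_sup, Submodule.add_eq_sup]
      refine sup_le (sup_le ?_ ?_) ?_
      · exact le_trans (Ideal.mul_le_right (I := LI) (J := LJ)) le_sup_left
      · exact hQI
      · exact le_sup_right
end

section
/- Let k be an algebraically closed field of characteristic zero, let n ≥ 4, and let e_0, …, e_{n−1} be the standard basis of k^n. For each i (indices taken modulo n) let L_i be the 2-dimensional subspace of k^n spanned by e_i and e_{i+1}, so that L_0, …, L_{n−1} form a cycle of n lines. Then the vanishing ideal of the union ⋃_{i=0}^{n−1} L_i in k[x_0, …, x_{n−1}] is generated by the squarefree quadratic monomials x_i·x_j for all pairs i ≠ j with j ≢ i+1 and j ≢ i−1 modulo n. -/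
set_option maxHeartbeats 1000000

open MvPolynomial

section Aux

variable {k : Type} [Field k] {n : ℕ}

/-- `aeval` of a monomial under "keep variables satisfying `P`, kill the rest". -/
lemma aeval_keep_monomial (P : Fin n → Prop) [DecidablePred P] (d : Fin n →₀ ℕ) (c : k) :
    aeval (fun m => if P m then X m else (0 : MvPolynomial (Fin n) k)) (monomial d c)
      = if (∀ m ∈ d.support, P m) then monomial d c else 0 := by
  classical
  rw [aeval_monomial]
  by_cases hall : ∀ m ∈ d.support, P m
  · rw [if_pos hall, monomial_eq]
    congr 1
    refine Finsupp.prod_congr fun m hm => ?_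
    rw [if_pos (hall m hm)]
  · rw [if_neg hall]
    push_neg at hall
    obtain ⟨m, hm, hPm⟩ := hall
    rw [Finsupp.prod, Finset.prod_eq_zero hm, mul_zero]
    rw [if_neg hPm]
    exact zero_pow (Finsupp.mem_support_iff.mp hm)

lemma coeff_aeval_keep (P : Fin n → Prop) [DecidablePred P] (d : Fin n →₀ ℕ)
    (hd : ∀ m ∈ d.support, P m) (q : MvPolynomial (Fin n) k) :
    coeff d (aeval (fun m => if P m then X m else (0 : MvPolynomial (Fin n) k)) q)
      = coeff d q := by
  classical
  conv_lhs => rw [q.as_sum]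
  rw [map_sum, coeff_sum]
  have : ∀ d' ∈ q.support,
      coeff d (aeval (fun m => if P m then X m else (0 : MvPolynomial (Fin n) k))
        (monomial d' (coeff d' q))) = if d' = d then coeff d' q else 0 := by
    intro d' _
    rw [aeval_keep_monomial]
    by_cases hall : ∀ m ∈ d'.support, P m
    · rw [if_pos hall, coeff_monomial]
    · rw [if_neg hall, coeff_zero, eq_comm]
      rw [if_neg]
      rintro rfl
      exact hall hd
  rw [Finset.sum_congr rfl this, Finset.sum_ite_eq' q.support d (fun d' => coeff d' q)]
  by_cases h : d ∈ q.support
  · rw [if_pos h]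
  · rw [if_neg h, eq_comm, ← notMem_support_iff]
    exact h

lemma eval_aeval'' (f : Fin n → MvPolynomial (Fin n) k) (x : Fin n → k)
    (q : MvPolynomial (Fin n) k) :
    eval x (aeval f q) = eval (fun m => eval x (f m)) q := by
  rw [aeval_def, show (algebraMap k (MvPolynomial (Fin n) k)) = C from rfl,
    eval₂_comp_left (eval x) C f q]
  have h1 : (eval x).comp C = RingHom.id k := by
    ext c; simp
  rw [h1]
  rfl

end Aux

theorem cycle_of_lines_ideal_generated_by_quadratic_monomials
    {k : Type} [Field k] [IsAlgClosed k] [CharZero k]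
    (n : ℕ) [NeZero n] (hn : 4 ≤ n)
    (L : Fin n → Submodule k (Fin n → k))
    (hL : ∀ i : Fin n,
      L i = Submodule.span k {Pi.single i (1 : k), Pi.single (i + 1) (1 : k)}) :
    vanishingIdeal k n (⋃ i : Fin n, (L i : Set (Fin n → k))) =
      Ideal.span {q : MvPolynomial (Fin n) k |
        ∃ i j : Fin n, i ≠ j ∧ j ≠ i + 1 ∧ j ≠ i - 1 ∧ q = X i * X j} := by
  classical
  -- basic facts about `Fin n`
  open Fin.NatCast in
  have hmn0 : ∀ m : ℕ, 0 < m → m < n → ((m : Fin n) ≠ 0) := by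
    intro m hm hmn h
    rw [Fin.natCast_eq_zero] at h
    exact absurd (Nat.le_of_dvd hm h) (by omega)
  have h1 : (1 : Fin n) ≠ 0 := by open Fin.CommRing in simpa using hmn0 1 (by omega) (by omega)
  have h2 : (2 : Fin n) ≠ 0 := by open Fin.CommRing in simpa using hmn0 2 (by omega) (by omega)
  have h3 : (3 : Fin n) ≠ 0 := by open Fin.CommRing in simpa using hmn0 3 (by omega) (by omega)
  have hii : ∀ i : Fin n, i ≠ i + 1 := by
    intro i h
    exact h1 (by open Fin.CommRing in linear_combination h.symm)
  set S : Set (MvPolynomial (Fin n) k) :=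
    {q : MvPolynomial (Fin n) k |
      ∃ i j : Fin n, i ≠ j ∧ j ≠ i + 1 ∧ j ≠ i - 1 ∧ q = X i * X j} with hS
  set U : Set (Fin n → k) := ⋃ i : Fin n, (L i : Set (Fin n → k)) with hU
  -- Easy inclusion: the generators vanish on every line.
  have hIV : Ideal.span S ≤ vanishingIdeal k n U := by
    rw [Ideal.span_le]
    rintro q ⟨i, j, hij, hj1, hj2, rfl⟩
    intro x hx
    simp only [hU, Set.mem_iUnion, SetLike.mem_coe] at hx
    obtain ⟨m, hm⟩ := hx
    rw [hL m, Submodule.mem_span_pair] at hm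
    obtain ⟨a, b, rfl⟩ := hm
    have hxc : ∀ c : Fin n, c ≠ m → c ≠ m + 1 →
        (a • (Pi.single m (1:k) : Fin n → k) + b • (Pi.single (m+1) (1:k) : Fin n → k)) c = 0 := by
      intro c hc hc'
      simp [Pi.single_apply, hc, hc']
    rw [map_mul, eval_X, eval_X]
    by_cases him : i = m
    · subst him
      rw [hxc j (Ne.symm hij) hj1, mul_zero]
    · by_cases him' : i = m + 1
      · subst him'
        have hjm : j ≠ m := by
          intro h
          exact hj2 (by open Fin.CommRing in (rw [h]; ring))
        rw [hxc j hjm (Ne.symm hij), mul_zero]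
      · rw [hxc i him him', zero_mul]
  refine le_antisymm ?_ hIV
  intro p hp
  -- goodness of a monomial: supported on a pair of cyclically adjacent variables
  set good : (Fin n →₀ ℕ) → Prop := fun d => ∃ i, ∀ m ∈ d.support, m = i ∨ m = i + 1
    with hgooddef
  set b : MvPolynomial (Fin n) k :=
    ∑ d ∈ p.support.filter (fun d => ¬ good d), monomial d (coeff d p) with hb
  -- the bad part lies in the span
  have hbI : b ∈ Ideal.span S := by
    refine Ideal.sum_mem _ fun d hd => ?_
    rw [Finset.mem_filter] at hd
    obtain ⟨hds, hbad⟩ := hd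
    -- extract a nonadjacent pair from the support
    obtain ⟨a, c, ha, hc, hac, hc1, hc2⟩ :
        ∃ a c, a ∈ d.support ∧ c ∈ d.support ∧ a ≠ c ∧ c ≠ a + 1 ∧ c ≠ a - 1 := by
      obtain ⟨a, ha⟩ : ∃ a, a ∈ d.support := by
        by_contra h'
        push_neg at h'
        exact hbad ⟨0, fun m hm => absurd hm (h' m)⟩
      by_cases hex : ∃ c ∈ d.support, c ≠ a ∧ c ≠ a + 1 ∧ c ≠ a - 1
      · obtain ⟨c, hc, hca, hc1, hc2⟩ := hex
        exact ⟨a, c, ha, hc, Ne.symm hca, hc1, hc2⟩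
      · push_neg at hex
        have ha1 : a + 1 ∈ d.support := by
          by_contra h'
          refine hbad ⟨a - 1, fun m hm => ?_⟩
          have hm1 : (a - 1) + 1 = a := by open Fin.CommRing in ring
          rcases eq_or_ne m a with rfl | hma
          · exact Or.inr hm1.symm
          · rcases eq_or_ne m (a + 1) with rfl | hma1
            · exact absurd hm h'
            · exact Or.inl (hex m hm hma hma1)
        have ha0 : a - 1 ∈ d.support := by
          by_contra h'
          refine hbad ⟨a, fun m hm => ?_⟩
          rcases eq_or_ne m a with rfl | hma
          · exact Or.inl rfl
          · rcases eq_or_ne m (a + 1) with rfl | hma1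
            · exact Or.inr rfl
            · rw [hex m hm hma hma1] at hm
              exact absurd hm h'
        refine ⟨a - 1, a + 1, ha0, ha1, ?_, ?_, ?_⟩
        · intro h; exact h2 (by open Fin.CommRing in linear_combination h.symm)
        · intro h; exact h1 (by open Fin.CommRing in linear_combination h)
        · intro h; exact h3 (by open Fin.CommRing in linear_combination h)
    -- factor the monomial
    have hda : d a ≠ 0 := Finsupp.mem_support_iff.mp ha
    have hdc : d c ≠ 0 := Finsupp.mem_support_iff.mp hc
    have hsplit : d = ((d - (Finsupp.single a 1 + Finsupp.single c 1))
        + Finsupp.single a 1) + Finsupp.single c 1 := by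
      ext m
      simp only [Finsupp.coe_add, Finsupp.coe_tsub, Pi.add_apply, Pi.sub_apply,
        Finsupp.single_apply]
      rcases eq_or_ne a m with ham | ham
      · subst ham
        rw [if_pos rfl, if_neg (Ne.symm hac)]
        omega
      · rw [if_neg ham]
        rcases eq_or_ne c m with hcm | hcm
        · subst hcm
          rw [if_pos rfl]
          omega
        · rw [if_neg hcm]
          omega
    set c0 := coeff d p with hc0
    have : monomial d c0
        = monomial (d - (Finsupp.single a 1 + Finsupp.single c 1)) c0
          * X a * X c := by
      conv_lhs => rw [hsplit]
      rw [monomial_add_single, monomial_add_single, pow_one, pow_one]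
    rw [this, mul_assoc]
    exact Ideal.mul_mem_left _ _ (Ideal.subset_span ⟨a, c, hac, hc1, hc2, rfl⟩)
  -- the good part vanishes
  have hpbV : (p - b) ∈ vanishingIdeal k n U :=
    Submodule.sub_mem _ hp (hIV hbI)
  have hcoeffb : ∀ d, coeff d b = if d ∈ p.support.filter (fun d => ¬ good d)
      then coeff d p else 0 := by
    intro d
    rw [hb, coeff_sum]
    have : ∀ d' ∈ p.support.filter (fun d => ¬ good d),
        coeff d (monomial d' (coeff d' p)) = if d' = d then coeff d' p else 0 := by
      intro d' _
      rw [coeff_monomial]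
    rw [Finset.sum_congr rfl this, Finset.sum_ite_eq']
  have hzero : p - b = 0 := by
    apply MvPolynomial.ext
    intro d
    rw [coeff_zero, coeff_sub]
    by_cases hgood : good d
    · obtain ⟨i, hi⟩ := hgood
      have hv : aeval (fun m => if (m = i ∨ m = i + 1) then X m
          else (0 : MvPolynomial (Fin n) k)) (p - b) = 0 := by
        apply MvPolynomial.funext
        intro x
        rw [map_zero, eval_aeval'']
        have hx' : (fun m => eval x (if (m = i ∨ m = i + 1) then X m
            else (0 : MvPolynomial (Fin n) k)))
            = x i • (Pi.single i (1:k) : Fin n → k) + x (i+1) • (Pi.single (i+1) (1:k) : Fin n → k) := by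
          funext m
          rcases eq_or_ne m i with rfl | hmi
          · simp [Pi.single_apply, Ne.symm (hii m)]
          · rcases eq_or_ne m (i + 1) with rfl | hmi1
            · simp [Pi.single_apply, hii i, hmi]
            · simp [Pi.single_apply, hmi, hmi1]
        rw [hx']
        refine hpbV _ ?_
        simp only [hU, Set.mem_iUnion, SetLike.mem_coe]
        exact ⟨i, by rw [hL i, Submodule.mem_span_pair]; exact ⟨x i, x (i+1), rfl⟩⟩
      have h0 := coeff_aeval_keep (fun m => m = i ∨ m = i + 1) d hi (p - b)
      rw [hv, coeff_zero] at h0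
      rw [coeff_sub] at h0
      exact h0.symm
    · rw [hcoeffb d]
      by_cases hds : d ∈ p.support
      · rw [if_pos (Finset.mem_filter.mpr ⟨hds, hgood⟩), sub_self]
      · rw [if_neg (by simp [hds]), sub_zero, notMem_support_iff.mp hds]
  have : p = b := by rwa [sub_eq_zero] at hzero
  rw [this]
  exact hbI
end

section
/- Let G be a finite simple connected graph with d vertices and d + 1 edges (so G has genus g = 2) in which every vertex has degree at most 3. Then the girth of G (the length of a shortest cycle in G) is at most ⌊(2d − 1)/3⌋ + 1. -/
open SimpleGraph Finset
open scoped symmDiff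

variable {V : Type} [Fintype V] [DecidableEq V]

private lemma even_card_symmDiff {X Y : Finset (Sym2 V)} (hX : Even X.card) (hY : Even Y.card) :
    Even ((X ∆ Y).card) := by
  have hsub : X ∩ Y ⊆ X ∪ Y := Finset.inter_subset_left.trans Finset.subset_union_left
  have h1 := Finset.card_union_add_card_inter X Y
  have h2 : (X ∆ Y).card + (X ∩ Y).card = (X ∪ Y).card := by
    rw [symmDiff_eq_sup_sdiff_inf]
    exact Finset.card_sdiff_add_card_eq_card hsub
  simp only [Nat.even_iff] at hX hY ⊢
  omega

private lemma exists_cycle_subset (G : SimpleGraph V) (S : Finset (Sym2 V))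
    (hSE : ∀ e ∈ S, e ∈ G.edgeSet) (hne : S.Nonempty)
    (heven : ∀ v : V, Even ((S.filter (fun e => v ∈ e)).card)) :
    ∃ (u : V) (c : G.Walk u u), c.IsCycle ∧ ∀ e ∈ c.edges, e ∈ S := by
  by_contra hno
  push_neg at hno
  have key : ∀ n : ℕ, ∃ (x y : V) (p : G.Walk x y),
      p.IsPath ∧ (∀ e ∈ p.edges, e ∈ S) ∧ p.length = n + 1 := by
    intro n
    induction n with
    | zero =>
      obtain ⟨e, heS⟩ := hne
      have ha : e.out.1 ∈ e := Sym2.out_fst_mem e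
      obtain ⟨b, he⟩ := Sym2.mem_iff_exists.mp ha
      rw [he] at heS
      have hadj : G.Adj e.out.1 b := (G.mem_edgeSet).mp (hSE _ heS)
      refine ⟨e.out.1, b, Walk.cons hadj Walk.nil, ?_, ?_, by simp⟩
      · simp [Walk.cons_isPath_iff, hadj.ne]
      · intro f hf
        simp only [Walk.edges_cons, Walk.edges_nil, List.mem_singleton] at hf
        simpa [hf] using heS
    | succ n ih =>
      obtain ⟨x, y, p, hp, hpS, hlen⟩ := ih
      -- p is nonempty, so p = cons h q
      cases p with
      | nil => simp at hlen
      | @cons _ x' _ h q =>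
        have hfS : s(x, x') ∈ S := hpS _ (by simp)
        have hxq : x ∉ q.support := ((Walk.cons_isPath_iff h q).mp hp).2
        -- the incidence set at x has ≥ 2 elements
        have hmem : s(x, x') ∈ S.filter (fun e => x ∈ e) := by
          simp [hfS]
        have hcard : 1 < (S.filter (fun e => x ∈ e)).card := by
          rcases heven x with ⟨k, hk⟩
          have h1 : 0 < (S.filter (fun e => x ∈ e)).card := Finset.card_pos.mpr ⟨_, hmem⟩
          omega
        obtain ⟨e', he'mem, he'ne⟩ := Finset.exists_mem_ne hcard (s(x, x'))
        obtain ⟨he'S, hxe'⟩ := Finset.mem_filter.mp he'mem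
        obtain ⟨w, rfl⟩ := Sym2.mem_iff_exists.mp hxe'
        have hadj' : G.Adj x w := (G.mem_edgeSet).mp (hSE _ he'S)
        have hwx' : w ≠ x' := fun hh => he'ne (by rw [hh])
        have hnotin : s(x, w) ∉ (Walk.cons h q).edges := by
          simp only [Walk.edges_cons, List.mem_cons]
          rintro (hc | hc)
          · exact he'ne hc
          · exact hxq (Walk.fst_mem_support_of_mem_edges q hc)
        by_cases hw : w ∈ (Walk.cons h q).support
        · -- we get a cycle: contradiction with hno
          exfalso
          set P : G.Walk x y := Walk.cons h q
          have hr : (P.takeUntil w hw).IsPath := hp.takeUntil hw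
          have hre : s(w, x) ∉ (P.takeUntil w hw).edges := by
            rw [Sym2.eq_swap]
            exact fun hc => hnotin (Walk.edges_takeUntil_subset P hw hc)
          have hcyc : (Walk.cons hadj'.symm (P.takeUntil w hw)).IsCycle :=
            (Walk.cons_isCycle_iff _ hadj'.symm).mpr ⟨hr, hre⟩
          obtain ⟨f, hf, hfS'⟩ := hno _ _ hcyc
          apply hfS'
          simp only [Walk.edges_cons, List.mem_cons] at hf
          rcases hf with rfl | hf
          · rwa [Sym2.eq_swap]
          · exact hpS _ (Walk.edges_takeUntil_subset P hw hf)
        · refine ⟨w, y, Walk.cons hadj'.symm (Walk.cons h q), ?_, ?_, by simp [hlen]⟩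
          · exact (Walk.cons_isPath_iff _ _).mpr ⟨hp, hw⟩
          · intro f hf
            simp only [Walk.edges_cons, List.mem_cons] at hf
            rcases hf with rfl | hf
            · rwa [Sym2.eq_swap]
            · exact hpS _ (by simpa using hf)
  obtain ⟨x, y, p, hp, hpS, hlen⟩ := key (Fintype.card V)
  have := hp.length_lt
  omega
/-- Let `G` be a finite simple connected graph with `d` vertices and
`d + 1` edges (so `G` has genus `g = 2`) in which every vertex has degree at most 3.
Then the girth of `G` (the length of a shortest cycle, `∞` if acyclic) is at most
`⌊(2d − 1)/3⌋ + 1`. -/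
theorem girth_le_of_genus_two
    {V : Type} [Fintype V] [DecidableEq V] (G : SimpleGraph V) [DecidableRel G.Adj]
    (hconn : G.Connected)
    (hdeg : ∀ v : V, G.degree v ≤ 3)
    (d : ℕ)
    (hd : Fintype.card V = d)
    (hm : G.edgeFinset.card = d + 1) :
    G.egirth ≤ ((2 * d - 1) / 3 + 1 : ℕ) := by
  classical
  haveI : Nonempty V := hconn.nonempty
  have hd1 : 1 ≤ d := hd ▸ Fintype.card_pos
  -- G is not acyclic
  have hnac : ¬ G.IsAcyclic := by
    intro hac
    have ht : G.IsTree := ⟨hconn, hac⟩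
    have := ht.card_edgeFinset
    omega
  obtain ⟨a, C, hC, hgC⟩ := exists_egirth_eq_length.mpr hnac
  set g := C.length with hg
  have hle : ∀ (u : V) (c : G.Walk u u), c.IsCycle → g ≤ c.length := by
    intro u c hc
    have h1 : G.egirth ≤ (c.length : ℕ∞) := le_egirth.mp le_rfl u c hc
    rw [hgC] at h1
    exact_mod_cast h1
  -- pick an edge of C
  have hCne : C.edges ≠ [] := by
    have h3 := hC.three_le_length
    intro hnil
    have := C.length_edges
    rw [hnil] at this
    simp at this
    omega
  obtain ⟨e, he⟩ := List.exists_mem_of_ne_nil _ hCne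
  have hv : e.out.1 ∈ e := Sym2.out_fst_mem e
  obtain ⟨w, hew⟩ := Sym2.mem_iff_exists.mp hv
  set v := e.out.1
  rw [hew] at he
  -- after deleting e, endpoints still reachable
  have hreach : (G \ SimpleGraph.fromEdgeSet {s(v, w)}).Reachable v w :=
    (adj_and_reachable_delete_edges_iff_exists_cycle.mpr ⟨a, C, hC, he⟩).2
  set G' := G.deleteEdges {s(v, w)} with hG'
  have hreach' : G'.Reachable v w := hreach
  -- G' is connected
  have hpre : ∀ x y : V, G'.Reachable x y := by
    intro x y
    obtain ⟨P⟩ := hconn.preconnected x y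
    induction P with
    | nil => exact Reachable.refl _
    | @cons x x₁ y hadj q ih =>
      refine Reachable.trans ?_ ih
      by_cases hcase : s(x, x₁) = s(v, w)
      · rw [Sym2.eq_iff] at hcase
        rcases hcase with ⟨rfl, rfl⟩ | ⟨rfl, rfl⟩
        · exact hreach'
        · exact hreach'.symm
      · refine SimpleGraph.Adj.reachable ?_
        rw [hG', SimpleGraph.deleteEdges_adj]
        exact ⟨hadj, by simpa using hcase⟩
  have hG'conn : G'.Connected := by
    rw [SimpleGraph.connected_iff]
    exact ⟨fun x y => hpre x y, hconn.nonempty⟩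
  -- G' has d edges
  haveI : DecidableRel G'.Adj := Classical.decRel _
  have hefin : G'.edgeFinset = G.edgeFinset \ {s(v, w)} := by
    have hset : G'.edgeSet = G.edgeSet \ {s(v, w)} := SimpleGraph.edgeSet_deleteEdges _
    ext f
    simp only [SimpleGraph.mem_edgeFinset, hset, Set.mem_diff, Set.mem_singleton_iff,
      Finset.mem_sdiff, Finset.mem_singleton]
  have hecard : G'.edgeFinset.card = d := by
    rw [hefin, Finset.card_sdiff_of_subset (by simp [SimpleGraph.mem_edgeFinset, G.mem_edgeSet.mpr,
      C.adj_of_mem_edges he])]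
    simp [hm]
  -- G' has a cycle
  have hnac' : ¬ G'.IsAcyclic := by
    intro hac
    have ht : G'.IsTree := ⟨hG'conn, hac⟩
    have := ht.card_edgeFinset
    omega
  rw [SimpleGraph.IsAcyclic] at hnac'
  push_neg at hnac'
  obtain ⟨b, D0, hD0⟩ := hnac'
  -- transfer D0 to G
  have hGle : G' ≤ G := SimpleGraph.deleteEdges_le _
  set D : G.Walk b b := D0.mapLe hGle with hD
  have hDc : D.IsCycle := hD0.mapLe _
  have hDedges : D.edges = D0.edges := by
    rw [hD]
    simp only [Walk.mapLe, Walk.edges_map]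
    have hid : (Sym2.map ⇑(SimpleGraph.Hom.ofLE hGle)) = id := by
      funext z
      induction z using Sym2.ind with
      | _ x y => simp [Sym2.map_pair_eq, SimpleGraph.Hom.ofLE_apply]
    rw [hid, List.map_id]
  have henotD : s(v, w) ∉ D.edges := by
    rw [hDedges]
    intro hc
    have := D0.edges_subset_edgeSet hc
    rw [hG', SimpleGraph.edgeSet_deleteEdges] at this
    simp at this
  -- edge sets of the two cycles
  set A : Finset (Sym2 V) := C.edges.toFinset with hA
  set B : Finset (Sym2 V) := D.edges.toFinset with hB
  have hCnodup : C.edges.Nodup := hC.edges_nodup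
  have hDnodup : D.edges.Nodup := hDc.edges_nodup
  have hAcard : A.card = g := by
    rw [hA, List.toFinset_card_of_nodup hCnodup, C.length_edges]
  have hBcard : B.card = D.length := by
    rw [hB, List.toFinset_card_of_nodup hDnodup, D.length_edges]
  have hgB : g ≤ B.card := hBcard ▸ hle b D hDc
  -- parity of incidence in cycle edge sets
  have hparity : ∀ (x y0 : V) (p : G.Walk y0 y0), p.IsCycle →
      Even ((p.edges.toFinset.filter (fun e => x ∈ e)).card) := by
    intro x y0 p hp
    have ht := hp.isTrail.even_countP_edges_iff x
    simp only [ne_eq, not_true_eq_false, false_implies, iff_true] at ht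
    have hnd : p.edges.Nodup := hp.edges_nodup
    rw [List.countP_eq_length_filter, ← List.toFinset_card_of_nodup (hnd.filter _),
      List.toFinset_filter] at ht
    simpa using ht
  -- symmetric difference
  set S : Finset (Sym2 V) := A ∆ B with hS
  have hSsub : ∀ f ∈ S, f ∈ G.edgeSet := by
    intro f hf
    rw [hS, Finset.mem_symmDiff] at hf
    rcases hf with ⟨hf, -⟩ | ⟨hf, -⟩
    · exact C.edges_subset_edgeSet (by simpa [hA] using hf)
    · exact D.edges_subset_edgeSet (by simpa [hB] using hf)
  have hSne : S.Nonempty := by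
    refine ⟨s(v, w), ?_⟩
    rw [hS, Finset.mem_symmDiff]
    left
    exact ⟨by simp [hA, he], by simp [hB, henotD]⟩
  have hSeven : ∀ x : V, Even ((S.filter (fun e => x ∈ e)).card) := by
    intro x
    have hfilt : S.filter (fun e => x ∈ e)
        = (A.filter (fun e => x ∈ e)) ∆ (B.filter (fun e => x ∈ e)) := by
      ext f
      simp only [Finset.mem_filter, Finset.mem_symmDiff, hS]
      tauto
    rw [hfilt]
    exact even_card_symmDiff (hparity x a C hC) (hparity x b D hDc)
  obtain ⟨u0, c0, hc0, hc0S⟩ := exists_cycle_subset G S hSsub hSne hSeven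
  have hgc0 : g ≤ c0.length := hle _ _ hc0
  have hc0len : c0.length ≤ S.card := by
    have hnd : c0.edges.Nodup := hc0.edges_nodup
    calc c0.length = c0.edges.toFinset.card := by
          rw [List.toFinset_card_of_nodup hnd, c0.length_edges]
      _ ≤ S.card := Finset.card_le_card (fun f hf => hc0S f (List.mem_toFinset.mp hf))
  -- counting
  have hunion : (A ∪ B).card + (A ∩ B).card = A.card + B.card :=
    Finset.card_union_add_card_inter A B
  have hsd : S.card + (A ∩ B).card = (A ∪ B).card := by
    rw [hS, symmDiff_eq_sup_sdiff_inf]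
    exact Finset.card_sdiff_add_card_eq_card
      (Finset.inter_subset_left.trans Finset.subset_union_left)
  have hub : (A ∪ B).card ≤ d + 1 := by
    rw [← hm]
    refine Finset.card_le_card (Finset.union_subset ?_ ?_)
    · intro f hf
      exact SimpleGraph.mem_edgeFinset.mpr (C.edges_subset_edgeSet (by simpa [hA] using hf))
    · intro f hf
      exact SimpleGraph.mem_edgeFinset.mpr (D.edges_subset_edgeSet (by simpa [hB] using hf))
  have h3g : 3 * g ≤ 2 * d + 2 := by omega
  rw [hgC]
  exact_mod_cast Nat.cast_le.mpr (show g ≤ (2 * d - 1) / 3 + 1 by omega)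
end
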